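/- arXiv:2310.00589 — 6 statements merged into one kernel-verified Lean document; each statement's English description precedes it below -/
import Mathlib

section
/- Let Λ be an index set, let D^{(0)} := B_Λ, and let G^{(0)} := G(B_Λ). Then for every i ≥ 0, the i-th derived distribution is exactly the pattern subspace read off from the i-th transitive closure: D^{(i)} = span({Ω̃_{pq} : {p,q} is a solid edge of G^{(i)}} ∪ {E_{k,n+1} : {k,n+1} is a broken edge of G^{(i)}}). -/
open Matrix

attribute [local instance] LieRing.ofAssociativeRing

/-!
Common setup: real (n+1)×(n+1) matrices (rows/columns indexed by `Fin (n+1)`,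
where index `i : Fin n` cast via `Fin.castSucc` plays the role of `i ∈ {1,…,n}`
and `Fin.last n` plays the role of the index `n+1`), the Lie bracket
`⁅A,B⁆ = A*B - B*A`, the matrices `Ω̃_{ij}` and `E_{k,n+1}`, the Lie algebra
`se(n)`, index sets `Λ`, pattern subspaces `B_Λ`, graphs with solid/broken
edges, the one-step transitive closure, and derived distributions.
-/

/-- The ambient space of real (n+1)×(n+1) matrices. -/
abbrev Mat (n : ℕ) := Matrix (Fin (n + 1)) (Fin (n + 1)) ℝ

/-- `Ω̃_{ij}`: 1 in entry (i,j), −1 in entry (j,i), 0 elsewhere (indices among 1,…,n). -/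
def Omega {n : ℕ} (i j : Fin n) : Mat n :=
  Matrix.single i.castSucc j.castSucc 1 - Matrix.single j.castSucc i.castSucc 1

/-- `E_{k,n+1}`: 1 in entry (k, n+1), 0 elsewhere. -/
def Ecol {n : ℕ} (k : Fin n) : Mat n :=
  Matrix.single k.castSucc (Fin.last n) 1

/-- The set se(n): matrices whose (n+1)-th row is zero and with
`M(i,j) = −M(j,i)` for all 1 ≤ i,j ≤ n. -/
def seSet (n : ℕ) : Set (Mat n) :=
  {M | (∀ j, M (Fin.last n) j = 0) ∧
    ∀ i j : Fin n, M i.castSucc j.castSucc = - M j.castSucc i.castSucc}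

/-- se(n) as a real subspace of the (n+1)×(n+1) matrices. -/
def seL (n : ℕ) : Submodule ℝ (Mat n) where
  carrier := seSet n
  add_mem' := by
    rintro a b ⟨ha1, ha2⟩ ⟨hb1, hb2⟩
    refine ⟨fun j => ?_, fun i j => ?_⟩
    · simp [Matrix.add_apply, ha1 j, hb1 j]
    · simp only [Matrix.add_apply, ha2 i j, hb2 i j]; ring
  zero_mem' := by
    refine ⟨fun j => ?_, fun i j => ?_⟩ <;> simp
  smul_mem' := by
    rintro c a ⟨ha1, ha2⟩
    refine ⟨fun j => ?_, fun i j => ?_⟩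
    · simp [Matrix.smul_apply, ha1 j]
    · simp only [Matrix.smul_apply, ha2 i j, smul_neg]

/-- Kronecker delta (real-valued). -/
def kron {n : ℕ} (p q : Fin n) : ℝ := if p = q then 1 else 0

/-- An index set Λ: a set of pairs (p,q) with p < q, i.e. a subset of
`{(i,j) : 1 ≤ i < j ≤ n} ∪ {(k, n+1) : 1 ≤ k ≤ n}`. -/
def IndexSet {n : ℕ} (Λ : Set (Fin (n + 1) × Fin (n + 1))) : Prop :=
  ∀ e ∈ Λ, e.1 < e.2

/-- The generating set `{Ω̃_{ij} : (i,j) ∈ Λ, j ≤ n} ∪ {E_{k,n+1} : (k,n+1) ∈ Λ}`. -/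
def genSet {n : ℕ} (Λ : Set (Fin (n + 1) × Fin (n + 1))) : Set (Mat n) :=
  {M | (∃ i j : Fin n, (i.castSucc, j.castSucc) ∈ Λ ∧ M = Omega i j) ∨
    (∃ k : Fin n, (k.castSucc, Fin.last n) ∈ Λ ∧ M = Ecol k)}

/-- The pattern subspace `B_Λ`. -/
def BLam {n : ℕ} (Λ : Set (Fin (n + 1) × Fin (n + 1))) : Submodule ℝ (Mat n) :=
  Submodule.span ℝ (genSet Λ)

/-- `B_Λ` generates `se(n)` as a Lie algebra: the smallest real subspace containing
`B_Λ` and closed under the bracket (i.e. the Lie subalgebra generated by `B_Λ`)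
equals `se(n)`. -/
def GeneratesSE (n : ℕ) (Λ : Set (Fin (n + 1) × Fin (n + 1))) : Prop :=
  (LieSubalgebra.lieSpan ℝ (Mat n) (BLam Λ : Set (Mat n)) : Set (Mat n)) = seSet n

/-- A graph on vertices {1,…,n+1} recorded by its solid and broken adjacency relations. -/
structure SBGraph (n : ℕ) where
  solid : Fin (n + 1) → Fin (n + 1) → Prop
  broken : Fin (n + 1) → Fin (n + 1) → Prop

/-- A well-formed solid/broken graph: simple and symmetric; solid edges have both
endpoints among 1,…,n, broken edges have one endpoint equal to n+1. -/
def SBGraph.Good {n : ℕ} (G : SBGraph n) : Prop :=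
  (∀ p q, G.solid p q → G.solid q p) ∧ (∀ p q, G.solid p q → p ≠ q) ∧
  (∀ p q, G.solid p q → p ≠ Fin.last n ∧ q ≠ Fin.last n) ∧
  (∀ p q, G.broken p q → G.broken q p) ∧ (∀ p q, G.broken p q → p ≠ q) ∧
  (∀ p q, G.broken p q → p = Fin.last n ∨ q = Fin.last n)

/-- The one-step closure: for distinct vertices i,j,k, add a solid edge {i,k} whenever
{i,j} and {j,k} are both solid, and a broken edge {i,k} whenever one of {i,j},{j,k} is
solid and the other is broken (nothing is added when both are broken). -/
def SBGraph.step {n : ℕ} (G : SBGraph n) : SBGraph n where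
  solid := fun i k => G.solid i k ∨
    (∃ j, i ≠ j ∧ j ≠ k ∧ i ≠ k ∧ G.solid i j ∧ G.solid j k)
  broken := fun i k => G.broken i k ∨
    (∃ j, i ≠ j ∧ j ≠ k ∧ i ≠ k ∧
      ((G.solid i j ∧ G.broken j k) ∨ (G.broken i j ∧ G.solid j k)))

/-- The l-th transitive closure `G^{(l)}`. -/
def SBGraph.closure {n : ℕ} (G : SBGraph n) (l : ℕ) : SBGraph n :=
  (fun H => SBGraph.step H)^[l] G

/-- `G` is the complete graph on the n+1 vertices: every pair of distinct vertices
is joined by a (solid or broken) edge. -/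
def SBGraph.IsComplete {n : ℕ} (G : SBGraph n) : Prop :=
  ∀ p q : Fin (n + 1), p ≠ q → G.solid p q ∨ G.broken p q

/-- The graph `G(B_Λ)` associated with a pattern: solid edges {i,j} for (i,j) ∈ Λ with
j ≤ n, broken edges {k,n+1} for (k,n+1) ∈ Λ. -/
def patternGraph {n : ℕ} (Λ : Set (Fin (n + 1) × Fin (n + 1))) : SBGraph n where
  solid := fun p q => ∃ i j : Fin n, (i.castSucc, j.castSucc) ∈ Λ ∧
    ((p = i.castSucc ∧ q = j.castSucc) ∨ (p = j.castSucc ∧ q = i.castSucc))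
  broken := fun p q => ∃ k : Fin n, (k.castSucc, Fin.last n) ∈ Λ ∧
    ((p = k.castSucc ∧ q = Fin.last n) ∨ (p = Fin.last n ∧ q = k.castSucc))

/-- One step of the derived-distribution construction:
`D ↦ D + span{[A₁,A₂] : A₁,A₂ ∈ D}`. -/
def derivedStep {n : ℕ} (D : Submodule ℝ (Mat n)) : Submodule ℝ (Mat n) :=
  D ⊔ Submodule.span ℝ {M | ∃ A B, A ∈ D ∧ B ∈ D ∧ M = A * B - B * A}

/-- The i-th derived distribution `D^{(i)}`. -/
def derivedIter {n : ℕ} (D : Submodule ℝ (Mat n)) (i : ℕ) : Submodule ℝ (Mat n) :=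
  (fun S => derivedStep S)^[i] D


namespace Stmt5Aux

variable {n : ℕ}

lemma eb_mul (a b c d : Fin (n + 1)) :
    (Matrix.single a b (1 : ℝ)) * Matrix.single c d 1 =
      if b = c then Matrix.single a d 1 else 0 := by
  split_ifs with h
  · subst h; simpa using Matrix.single_mul_single_same (c := (1 : ℝ)) a b d 1
  · exact Matrix.single_mul_single_of_ne (c := (1 : ℝ)) a b c h 1

lemma kron_smul (x y : Fin n) (M : Mat n) :
    kron x y • M = if x = y then M else 0 := by
  unfold kron; split_ifs <;> simp

lemma castSucc_ne_last' (i : Fin n) : i.castSucc ≠ Fin.last n :=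
  (Fin.castSucc_lt_last i).ne

set_option maxHeartbeats 1000000 in
lemma bracket_omega (p q r s : Fin n) :
    Omega p q * Omega r s - Omega r s * Omega p q =
      kron q r • Omega p s - kron p r • Omega q s - kron q s • Omega p r +
        kron p s • Omega q r := by
  unfold Omega
  simp only [sub_mul, mul_sub, eb_mul, kron_smul, Fin.castSucc_inj]
  split_ifs <;> subst_vars <;> first
    | abel1
    | simp_all

lemma bracket_omega_ecol (p q k : Fin n) :
    Omega p q * Ecol k - Ecol k * Omega p q = kron q k • Ecol p - kron p k • Ecol q := by
  have h1 := castSucc_ne_last' p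
  have h2 := castSucc_ne_last' q
  have h3 := castSucc_ne_last' k
  unfold Omega Ecol
  simp only [sub_mul, mul_sub, eb_mul, kron_smul, Fin.castSucc_inj]
  split_ifs <;> subst_vars <;> first
    | abel1
    | simp_all

lemma bracket_ecol (k l : Fin n) :
    Ecol k * Ecol l - Ecol l * Ecol k = 0 := by
  unfold Ecol
  rw [eb_mul, eb_mul,
    if_neg (fun h : Fin.last n = l.castSucc => castSucc_ne_last' l h.symm),
    if_neg (fun h : Fin.last n = k.castSucc => castSucc_ne_last' k h.symm)]
  simp

/-- Pairwise brackets of a set. -/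
def pairBr (S : Set (Mat n)) : Set (Mat n) :=
  {M | ∃ a b, a ∈ S ∧ b ∈ S ∧ M = a * b - b * a}

lemma bracket_mem_span (S : Set (Mat n)) {A B : Mat n}
    (hA : A ∈ Submodule.span ℝ S) (hB : B ∈ Submodule.span ℝ S) :
    A * B - B * A ∈ Submodule.span ℝ (pairBr S) := by
  induction hA using Submodule.span_induction with
  | mem a ha =>
    induction hB using Submodule.span_induction with
    | mem b hb => exact Submodule.subset_span ⟨a, b, ha, hb, rfl⟩
    | zero => simp
    | add x y hx hy ihx ihy =>
        have h : a * (x + y) - (x + y) * a = (a * x - x * a) + (a * y - y * a) := by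
          noncomm_ring
        rw [h]; exact add_mem ihx ihy
    | smul c x hx ih =>
        have h : a * (c • x) - (c • x) * a = c • (a * x - x * a) := by
          simp [mul_smul_comm, smul_mul_assoc, smul_sub]
        rw [h]; exact Submodule.smul_mem _ c ih
  | zero => simp
  | add x y hx hy ihx ihy =>
      have h : (x + y) * B - B * (x + y) = (x * B - B * x) + (y * B - B * y) := by
        noncomm_ring
      rw [h]; exact add_mem ihx ihy
  | smul c x hx ih =>
      have h : (c • x) * B - B * (c • x) = c • (x * B - B * x) := by
        simp [mul_smul_comm, smul_mul_assoc, smul_sub]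
      rw [h]; exact Submodule.smul_mem _ c ih

lemma derivedStep_span (S : Set (Mat n)) :
    derivedStep (Submodule.span ℝ S) = Submodule.span ℝ (S ∪ pairBr S) := by
  unfold derivedStep
  rw [Submodule.span_union]
  congr 1
  apply le_antisymm
  · rw [Submodule.span_le]
    rintro M ⟨A, B, hA, hB, rfl⟩
    exact bracket_mem_span S hA hB
  · rw [Submodule.span_le]
    rintro M ⟨a, b, ha, hb, rfl⟩
    exact Submodule.subset_span
      ⟨a, b, Submodule.subset_span ha, Submodule.subset_span hb, rfl⟩

/-- The generating set of a solid/broken graph. -/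
def edgeSet (G : SBGraph n) : Set (Mat n) :=
  {M | ∃ p q : Fin n, G.solid p.castSucc q.castSucc ∧ M = Omega p q} ∪
  {M | ∃ k : Fin n, G.broken k.castSucc (Fin.last n) ∧ M = Ecol k}

lemma omega_mem {G : SBGraph n} {p q : Fin n}
    (h : p = q ∨ G.solid p.castSucc q.castSucc) :
    Omega p q ∈ Submodule.span ℝ (edgeSet G) := by
  rcases h with rfl | h
  · have h0 : Omega p p = 0 := sub_self _
    rw [h0]; exact zero_mem _
  · exact Submodule.subset_span (Or.inl ⟨p, q, h, rfl⟩)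

lemma ecol_mem {G : SBGraph n} {k : Fin n} (h : G.broken k.castSucc (Fin.last n)) :
    Ecol k ∈ Submodule.span ℝ (edgeSet G) :=
  Submodule.subset_span (Or.inr ⟨k, h, rfl⟩)

lemma kron_smul_mem {T : Submodule ℝ (Mat n)} {x y : Fin n} {M : Mat n}
    (h : x = y → M ∈ T) : kron x y • M ∈ T := by
  rw [kron_smul]
  split_ifs with hxy
  · exact h hxy
  · exact zero_mem _

lemma good_step {G : SBGraph n} (h : G.Good) : G.step.Good := by
  obtain ⟨hss, hsn, hsl, hbs, hbn, hbl⟩ := h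
  refine ⟨?_, ?_, ?_, ?_, ?_, ?_⟩
  · rintro p q (h | ⟨j, hpj, hjq, hpq, h1, h2⟩)
    · exact Or.inl (hss _ _ h)
    · exact Or.inr ⟨j, Ne.symm hjq, Ne.symm hpj, Ne.symm hpq, hss _ _ h2, hss _ _ h1⟩
  · rintro p q (h | ⟨j, _, _, hpq, _, _⟩)
    · exact hsn _ _ h
    · exact hpq
  · rintro p q (h | ⟨j, _, _, _, h1, h2⟩)
    · exact hsl _ _ h
    · exact ⟨(hsl _ _ h1).1, (hsl _ _ h2).2⟩
  · rintro p q (h | ⟨j, hpj, hjq, hpq, (⟨h1, h2⟩ | ⟨h1, h2⟩)⟩)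
    · exact Or.inl (hbs _ _ h)
    · exact Or.inr ⟨j, Ne.symm hjq, Ne.symm hpj, Ne.symm hpq, Or.inr ⟨hbs _ _ h2, hss _ _ h1⟩⟩
    · exact Or.inr ⟨j, Ne.symm hjq, Ne.symm hpj, Ne.symm hpq, Or.inl ⟨hss _ _ h2, hbs _ _ h1⟩⟩
  · rintro p q (h | ⟨j, _, _, hpq, _⟩)
    · exact hbn _ _ h
    · exact hpq
  · rintro p q (h | ⟨j, _, _, _, (⟨h1, h2⟩ | ⟨h1, h2⟩)⟩)
    · exact hbl _ _ h
    · rcases hbl _ _ h2 with hj | hq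
      · exact absurd hj (hsl _ _ h1).2
      · exact Or.inr hq
    · rcases hbl _ _ h1 with hp | hj
      · exact Or.inl hp
      · exact absurd hj (hsl _ _ h2).1

lemma good_pattern {Λ : Set (Fin (n + 1) × Fin (n + 1))} (hΛ : IndexSet Λ) :
    (patternGraph Λ).Good := by
  refine ⟨?_, ?_, ?_, ?_, ?_, ?_⟩
  · rintro p q ⟨i, j, h, (⟨rfl, rfl⟩ | ⟨rfl, rfl⟩)⟩
    · exact ⟨i, j, h, Or.inr ⟨rfl, rfl⟩⟩
    · exact ⟨i, j, h, Or.inl ⟨rfl, rfl⟩⟩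
  · rintro p q ⟨i, j, h, (⟨rfl, rfl⟩ | ⟨rfl, rfl⟩)⟩
    · exact (hΛ _ h).ne
    · exact (hΛ _ h).ne'
  · rintro p q ⟨i, j, h, (⟨rfl, rfl⟩ | ⟨rfl, rfl⟩)⟩
    · exact ⟨castSucc_ne_last' i, castSucc_ne_last' j⟩
    · exact ⟨castSucc_ne_last' j, castSucc_ne_last' i⟩
  · rintro p q ⟨k, h, (⟨rfl, rfl⟩ | ⟨rfl, rfl⟩)⟩
    · exact ⟨k, h, Or.inr ⟨rfl, rfl⟩⟩
    · exact ⟨k, h, Or.inl ⟨rfl, rfl⟩⟩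
  · rintro p q ⟨k, h, (⟨rfl, rfl⟩ | ⟨rfl, rfl⟩)⟩
    · exact castSucc_ne_last' k
    · exact (castSucc_ne_last' k).symm
  · rintro p q ⟨k, h, (⟨rfl, rfl⟩ | ⟨rfl, rfl⟩)⟩
    · exact Or.inr rfl
    · exact Or.inl rfl

lemma good_closure {G : SBGraph n} (h : G.Good) (l : ℕ) : (G.closure l).Good := by
  induction l with
  | zero => exact h
  | succ l ih =>
      have : G.closure (l + 1) = (G.closure l).step :=
        Function.iterate_succ_apply' _ l G
      rw [this]; exact good_step ih

lemma solid_chain {G : SBGraph n} (hG : G.Good) {p m s : Fin n}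
    (h1 : G.solid p.castSucc m.castSucc) (h2 : G.solid m.castSucc s.castSucc) :
    p = s ∨ G.step.solid p.castSucc s.castSucc := by
  by_cases hps : p = s
  · exact Or.inl hps
  · exact Or.inr (Or.inr ⟨m.castSucc, hG.2.1 _ _ h1, hG.2.1 _ _ h2,
      fun h => hps (Fin.castSucc_inj.mp h), h1, h2⟩)

lemma broken_chain {G : SBGraph n} (hG : G.Good) {p m : Fin n}
    (h1 : G.solid p.castSucc m.castSucc) (h2 : G.broken m.castSucc (Fin.last n)) :
    G.step.broken p.castSucc (Fin.last n) :=
  Or.inr ⟨m.castSucc, hG.2.1 _ _ h1, castSucc_ne_last' m, castSucc_ne_last' p,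
    Or.inl ⟨h1, h2⟩⟩

lemma main_step {G : SBGraph n} (hG : G.Good) :
    derivedStep (Submodule.span ℝ (edgeSet G)) = Submodule.span ℝ (edgeSet G.step) := by
  rw [derivedStep_span]
  apply le_antisymm
  · rw [Submodule.span_le]
    rintro M (hM | hM)
    · rcases hM with ⟨p, q, h, rfl⟩ | ⟨k, h, rfl⟩
      · exact omega_mem (Or.inr (Or.inl h))
      · exact ecol_mem (Or.inl h)
    · obtain ⟨a, b, ha, hb, rfl⟩ := hM
      rcases ha with ⟨p, q, hpq, rfl⟩ | ⟨k, hk, rfl⟩ <;>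
        rcases hb with ⟨r, s, hrs, rfl⟩ | ⟨l, hl, rfl⟩
      · rw [bracket_omega]
        have hqp := hG.1 _ _ hpq
        have hsr := hG.1 _ _ hrs
        refine add_mem (sub_mem (sub_mem (kron_smul_mem ?_) (kron_smul_mem ?_))
          (kron_smul_mem ?_)) (kron_smul_mem ?_)
        · rintro rfl; exact omega_mem (solid_chain hG hpq hrs)
        · rintro rfl; exact omega_mem (solid_chain hG hqp hrs)
        · rintro rfl; exact omega_mem (solid_chain hG hpq hsr)
        · rintro rfl; exact omega_mem (solid_chain hG hqp hsr)
      · rw [bracket_omega_ecol]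
        refine sub_mem (kron_smul_mem ?_) (kron_smul_mem ?_)
        · rintro rfl; exact ecol_mem (broken_chain hG hpq hl)
        · rintro rfl; exact ecol_mem (broken_chain hG (hG.1 _ _ hpq) hl)
      · rw [show Ecol k * Omega r s - Omega r s * Ecol k =
            -(Omega r s * Ecol k - Ecol k * Omega r s) from (neg_sub _ _).symm,
          bracket_omega_ecol]
        refine neg_mem (sub_mem (kron_smul_mem ?_) (kron_smul_mem ?_))
        · rintro rfl; exact ecol_mem (broken_chain hG hrs hk)
        · rintro rfl; exact ecol_mem (broken_chain hG (hG.1 _ _ hrs) hk)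
      · rw [bracket_ecol]; exact zero_mem _
  · rw [Submodule.span_le]
    rintro M (⟨p, q, h, rfl⟩ | ⟨k, h, rfl⟩)
    · rcases h with h | ⟨j, hpj, hjq, hpq, h1, h2⟩
      · exact Submodule.subset_span (Or.inl (Or.inl ⟨p, q, h, rfl⟩))
      · obtain ⟨m, rfl⟩ := Fin.exists_castSucc_eq.mpr (hG.2.2.1 _ _ h1).2
        have hpm : ¬ p = m := fun h => hpj (by rw [h])
        have hmq : ¬ m = q := fun h => hjq (by rw [h])
        have key : Omega p m * Omega m q - Omega m q * Omega p m = Omega p q := by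
          rw [bracket_omega]
          unfold kron
          rw [if_pos rfl, if_neg hpm, if_neg hmq]
          simp [show Omega m m = 0 from sub_self _]
        exact Submodule.subset_span (Or.inr ⟨Omega p m, Omega m q,
          Or.inl ⟨p, m, h1, rfl⟩, Or.inl ⟨m, q, h2, rfl⟩, key.symm⟩)
    · rcases h with h | ⟨j, hkj, hjl, hkl, (⟨h1, h2⟩ | ⟨h1, h2⟩)⟩
      · exact Submodule.subset_span (Or.inl (Or.inr ⟨k, h, rfl⟩))
      · obtain ⟨m, rfl⟩ := Fin.exists_castSucc_eq.mpr hjl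
        have hkm : ¬ k = m := fun h => hkj (by rw [h])
        have key : Omega k m * Ecol m - Ecol m * Omega k m = Ecol k := by
          rw [bracket_omega_ecol]
          unfold kron
          rw [if_pos rfl, if_neg hkm]
          simp
        exact Submodule.subset_span (Or.inr ⟨Omega k m, Ecol m,
          Or.inl ⟨k, m, h1, rfl⟩, Or.inr ⟨m, h2, rfl⟩, key.symm⟩)
      · exact absurd rfl (hG.2.2.1 _ _ h2).2

lemma base_case (Λ : Set (Fin (n + 1) × Fin (n + 1))) :
    BLam Λ = Submodule.span ℝ (edgeSet (patternGraph Λ)) := by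
  unfold BLam
  apply le_antisymm <;> rw [Submodule.span_le]
  · rintro M (⟨i, j, h, rfl⟩ | ⟨k, h, rfl⟩)
    · exact Submodule.subset_span (Or.inl ⟨i, j, ⟨i, j, h, Or.inl ⟨rfl, rfl⟩⟩, rfl⟩)
    · exact Submodule.subset_span (Or.inr ⟨k, ⟨k, h, Or.inl ⟨rfl, rfl⟩⟩, rfl⟩)
  · rintro M (⟨p, q, ⟨i, j, h, (⟨hp, hq⟩ | ⟨hp, hq⟩)⟩, rfl⟩ | ⟨k, ⟨k', h, (⟨hp, _⟩ | ⟨hp, _⟩)⟩, rfl⟩)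
    · obtain rfl : p = i := Fin.castSucc_inj.mp hp
      obtain rfl : q = j := Fin.castSucc_inj.mp hq
      exact Submodule.subset_span (Or.inl ⟨p, q, h, rfl⟩)
    · obtain rfl : p = j := Fin.castSucc_inj.mp hp
      obtain rfl : q = i := Fin.castSucc_inj.mp hq
      have hneg : Omega p q = -Omega q p := by
        unfold Omega; abel
      rw [hneg]
      exact neg_mem (Submodule.subset_span (Or.inl ⟨q, p, h, rfl⟩))
    · obtain rfl : k = k' := Fin.castSucc_inj.mp hp
      exact Submodule.subset_span (Or.inr ⟨k, h, rfl⟩)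
    · exact absurd hp (castSucc_ne_last' k)

end Stmt5Aux

/-- For D⁽⁰⁾ = B_Λ and G⁽⁰⁾ = G(B_Λ), the i-th derived distribution
equals the pattern subspace read off from the i-th transitive closure:
`D⁽ⁱ⁾ = span({Ω̃_{pq} : {p,q} solid edge of G⁽ⁱ⁾} ∪ {E_{k,n+1} : {k,n+1} broken edge of G⁽ⁱ⁾})`. -/

theorem stmt5 (n : ℕ) (hn : 1 ≤ n) (Λ : Set (Fin (n + 1) × Fin (n + 1)))
    (hΛ : IndexSet Λ) (i : ℕ) :
    derivedIter (BLam Λ) i =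
      Submodule.span ℝ
        ({M | ∃ p q : Fin n,
            ((patternGraph Λ).closure i).solid p.castSucc q.castSucc ∧ M = Omega p q} ∪
         {M | ∃ k : Fin n,
            ((patternGraph Λ).closure i).broken k.castSucc (Fin.last n) ∧ M = Ecol k}) := by
  induction i with
  | zero =>
      show derivedIter (BLam Λ) 0 =
        Submodule.span ℝ (Stmt5Aux.edgeSet ((patternGraph Λ).closure 0))
      rw [show derivedIter (BLam Λ) 0 = BLam Λ from rfl,
        show (patternGraph Λ).closure 0 = patternGraph Λ from rfl]
      exact Stmt5Aux.base_case Λ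
  | succ i ih =>
      show derivedIter (BLam Λ) (i + 1) =
        Submodule.span ℝ (Stmt5Aux.edgeSet ((patternGraph Λ).closure (i + 1)))
      have hL : derivedIter (BLam Λ) (i + 1) = derivedStep (derivedIter (BLam Λ) i) :=
        Function.iterate_succ_apply' _ i _
      have hR : (patternGraph Λ).closure (i + 1) = ((patternGraph Λ).closure i).step :=
        Function.iterate_succ_apply' _ i _
      rw [hL, hR, ih]
      exact Stmt5Aux.main_step (Stmt5Aux.good_closure (Stmt5Aux.good_pattern hΛ) i)
end

section
/- Let Λ be an index set and let D^{(0)} := B_Λ. Then the sequence of derived distributions stabilizes after n steps: D^{(n)} = D^{(n+1)}, and D^{(n)} equals the Lie subalgebra generated by B_Λ, i.e., the smallest real subspace of se(n) containing B_Λ that is closed under the bracket. -/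
open Matrix

attribute [local instance 100] LieRing.ofAssociativeRing

namespace Stmt6Aux
open Matrix Submodule

variable {n : ℕ}

private lemma cs_ne_last (i : Fin n) : i.castSucc ≠ Fin.last n :=
  (Fin.castSucc_lt_last i).ne

private lemma last_ne_cs (i : Fin n) : Fin.last n ≠ i.castSucc :=
  (Fin.castSucc_lt_last i).ne'

private lemma std_mul (a b c d : Fin (n + 1)) :
    single a b (1 : ℝ) * single c d 1 =
      if b = c then single a d 1 else 0 := by
  split
  · rename_i h; subst h; simp
  · rename_i h; exact single_mul_single_of_ne 1 a b c h 1

private lemma omega_swap (i j : Fin n) : Omega j i = -Omega i j := by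
  rw [Omega, Omega, neg_sub]

private lemma br_oo {i j k : Fin n} (hij : i ≠ j) (hjk : j ≠ k) (hik : i ≠ k) :
    Omega i j * Omega j k - Omega j k * Omega i j = Omega i k := by
  simp only [Omega, sub_mul, mul_sub, std_mul, Fin.castSucc_inj]
  simp [hij, hjk, hik, Ne.symm hij, Ne.symm hjk, Ne.symm hik]

private lemma br_oo_disj {i j k l : Fin n} (h1 : j ≠ k) (h2 : j ≠ l) (h3 : i ≠ k)
    (h4 : i ≠ l) :
    Omega i j * Omega k l - Omega k l * Omega i j = 0 := by
  simp only [Omega, sub_mul, mul_sub, std_mul, Fin.castSucc_inj]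
  simp [h1, h2, h3, h4, Ne.symm h1, Ne.symm h2, Ne.symm h3, Ne.symm h4]

private lemma br_oe {i j : Fin n} (hij : i ≠ j) :
    Omega i j * Ecol j - Ecol j * Omega i j = Ecol i := by
  simp only [Omega, Ecol, sub_mul, mul_sub, std_mul, Fin.castSucc_inj]
  simp [hij, Ne.symm hij, last_ne_cs]

private lemma br_oe_disj {i j k : Fin n} (h1 : k ≠ i) (h2 : k ≠ j) :
    Omega i j * Ecol k - Ecol k * Omega i j = 0 := by
  simp only [Omega, Ecol, sub_mul, mul_sub, std_mul, Fin.castSucc_inj]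
  simp [Ne.symm h1, Ne.symm h2, last_ne_cs]

private lemma br_ee (k l : Fin n) : Ecol k * Ecol l - Ecol l * Ecol k = 0 := by
  simp only [Ecol, std_mul]
  simp [last_ne_cs]

private lemma neg_br (x y : Mat n) : (-x) * y - y * (-x) = -(x * y - y * x) := by
  noncomm_ring

private lemma br_neg (x y : Mat n) : x * (-y) - (-y) * x = -(x * y - y * x) := by
  noncomm_ring

private def gset (G : SBGraph n) : Set (Mat n) :=
  {M | (∃ i j : Fin n, G.solid i.castSucc j.castSucc ∧ M = Omega i j) ∨
       (∃ k : Fin n, G.broken k.castSucc (Fin.last n) ∧ M = Ecol k)}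

private abbrev spanG (G : SBGraph n) : Submodule ℝ (Mat n) :=
  Submodule.span ℝ (gset G)

private lemma omega_mem {G : SBGraph n} {i j : Fin n}
    (h : G.solid i.castSucc j.castSucc) : Omega i j ∈ spanG G :=
  subset_span (Or.inl ⟨i, j, h, rfl⟩)

private lemma ecol_mem {G : SBGraph n} {k : Fin n}
    (h : G.broken k.castSucc (Fin.last n)) : Ecol k ∈ spanG G :=
  subset_span (Or.inr ⟨k, h, rfl⟩)

private lemma cs_ne {i j : Fin n} (h : i ≠ j) :
    i.castSucc ≠ j.castSucc := by simpa using h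

private lemma cs_ne' {i j : Fin n} (h : i.castSucc ≠ j.castSucc) : i ≠ j := by
  intro he; exact h (by rw [he])

private lemma step_solid₂ {G : SBGraph n} {a b c : Fin n}
    (h1 : G.solid a.castSucc b.castSucc) (h2 : G.solid b.castSucc c.castSucc)
    (hab : a ≠ b) (hbc : b ≠ c) (hac : a ≠ c) :
    G.step.solid a.castSucc c.castSucc :=
  Or.inr ⟨b.castSucc, cs_ne hab, cs_ne hbc, cs_ne hac, h1, h2⟩

private lemma step_broken₂ {G : SBGraph n} {a b : Fin n}
    (h1 : G.solid a.castSucc b.castSucc) (h2 : G.broken b.castSucc (Fin.last n))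
    (hab : a ≠ b) : G.step.broken a.castSucc (Fin.last n) :=
  Or.inr ⟨b.castSucc, cs_ne hab, cs_ne_last b, cs_ne_last a, Or.inl ⟨h1, h2⟩⟩

private lemma gen_bracket_oe {G : SBGraph n} (hG : G.Good) {i j k : Fin n}
    (hij : G.solid i.castSucc j.castSucc) (hk : G.broken k.castSucc (Fin.last n)) :
    Omega i j * Ecol k - Ecol k * Omega i j ∈ spanG G.step := by
  obtain ⟨hss, hsn, hsl, hbs, hbn, hbl⟩ := hG
  have hij' : i ≠ j := cs_ne' (hsn _ _ hij)
  by_cases hkj : k = j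
  · subst hkj
    rw [br_oe hij']
    exact ecol_mem (step_broken₂ hij hk hij')
  · by_cases hki : k = i
    · subst hki
      rw [show Omega k j = -Omega j k from omega_swap j k, neg_br,
        br_oe (Ne.symm hij')]
      exact neg_mem (ecol_mem (step_broken₂ (hss _ _ hij) hk (Ne.symm hij')))
    · rw [br_oe_disj hki hkj]
      exact zero_mem _

private lemma gen_bracket {G : SBGraph n} (hG : G.Good) {a b : Mat n}
    (ha : a ∈ gset G) (hb : b ∈ gset G) :
    a * b - b * a ∈ spanG G.step := by
  obtain ⟨hss, hsn, hsl, hbs, hbn, hbl⟩ := hG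
  rcases ha with ⟨i, j, hij, rfl⟩ | ⟨k, hk, rfl⟩
  · rcases hb with ⟨k, l, hkl, rfl⟩ | ⟨m, hm, rfl⟩
    · have hij' : i ≠ j := cs_ne' (hsn _ _ hij)
      have hkl' : k ≠ l := cs_ne' (hsn _ _ hkl)
      by_cases hjk : j = k
      · subst hjk
        by_cases hil : i = l
        · subst hil
          rw [show Omega j i = -Omega i j from omega_swap i j, br_neg]
          simp
        · rw [br_oo hij' hkl' hil]
          exact omega_mem (step_solid₂ hij hkl hij' hkl' hil)
      · by_cases hik : i = k
        · subst hik
          by_cases hjl : j = l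
          · subst hjl; simp
          · rw [show Omega i j = -Omega j i from omega_swap j i, neg_br,
              br_oo (Ne.symm hij') hkl' hjl]
            exact neg_mem (omega_mem
              (step_solid₂ (hss _ _ hij) hkl (Ne.symm hij') hkl' hjl))
        · by_cases hjl : j = l
          · subst hjl
            rw [show Omega k j = -Omega j k from omega_swap j k, br_neg,
              br_oo hij' (Ne.symm hkl') hik]
            exact neg_mem (omega_mem
              (step_solid₂ hij (hss _ _ hkl) hij' (Ne.symm hkl') hik))
          · by_cases hil : i = l
            · subst hil
              rw [show Omega k i = -Omega i k from omega_swap i k, br_neg,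
                show Omega i j = -Omega j i from omega_swap j i, neg_br,
                br_oo (Ne.symm hij') (Ne.symm hkl') hjk, neg_neg]
              exact omega_mem (step_solid₂ (hss _ _ hij) (hss _ _ hkl)
                (Ne.symm hij') (Ne.symm hkl') hjk)
            · rw [br_oo_disj hjk hjl hik hil]
              exact zero_mem _
    · exact gen_bracket_oe ⟨hss, hsn, hsl, hbs, hbn, hbl⟩ hij hm
  · rcases hb with ⟨i, j, hij, rfl⟩ | ⟨m, hm, rfl⟩
    · rw [show Ecol k * Omega i j - Omega i j * Ecol k
        = -(Omega i j * Ecol k - Ecol k * Omega i j) from by noncomm_ring]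
      exact neg_mem (gen_bracket_oe ⟨hss, hsn, hsl, hbs, hbn, hbl⟩ hij hk)
    · rw [br_ee]
      exact zero_mem _

private lemma span_bracket_le {S : Set (Mat n)} {U : Submodule ℝ (Mat n)}
    (h : ∀ a ∈ S, ∀ b ∈ S, a * b - b * a ∈ U) :
    Submodule.span ℝ {M | ∃ A B, A ∈ Submodule.span ℝ S ∧
      B ∈ Submodule.span ℝ S ∧ M = A * B - B * A} ≤ U := by
  have key : ∀ B ∈ Submodule.span ℝ S, ∀ A ∈ Submodule.span ℝ S,
      A * B - B * A ∈ U := by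
    intro B hB
    induction hB using Submodule.span_induction with
    | mem b hb =>
      intro A hA
      induction hA using Submodule.span_induction with
      | mem a ha => exact h a ha b hb
      | zero => simpa using U.zero_mem
      | add x y hx hy px py =>
        have e : (x + y) * b - b * (x + y) = (x * b - b * x) + (y * b - b * y) := by
          noncomm_ring
        rw [e]; exact U.add_mem px py
      | smul c x hx px =>
        have e : (c • x) * b - b * (c • x) = c • (x * b - b * x) := by
          rw [smul_mul_assoc, mul_smul_comm, smul_sub]
        rw [e]; exact U.smul_mem c px
    | zero => intro A hA; simpa using U.zero_mem
    | add x y hx hy px py =>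
      intro A hA
      have e : A * (x + y) - (x + y) * A = (A * x - x * A) + (A * y - y * A) := by
        noncomm_ring
      rw [e]; exact U.add_mem (px A hA) (py A hA)
    | smul c x hx px =>
      intro A hA
      have e : A * (c • x) - (c • x) * A = c • (A * x - x * A) := by
        rw [mul_smul_comm, smul_mul_assoc, smul_sub]
      rw [e]; exact U.smul_mem c (px A hA)
  rw [Submodule.span_le]
  rintro M ⟨A, B, hA, hB, rfl⟩
  exact key B hB A hA

private lemma gset_step_mono {G : SBGraph n} : gset G ⊆ gset G.step := by
  rintro M (⟨i, j, h, rfl⟩ | ⟨k, h, rfl⟩)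
  · exact Or.inl ⟨i, j, Or.inl h, rfl⟩
  · exact Or.inr ⟨k, Or.inl h, rfl⟩

private lemma derivedStep_spanG {G : SBGraph n} (hG : G.Good) :
    derivedStep (spanG G) = spanG G.step := by
  apply le_antisymm
  · refine sup_le (Submodule.span_mono gset_step_mono) (span_bracket_le ?_)
    exact fun a ha b hb => gen_bracket hG ha hb
  · rw [Submodule.span_le]
    rintro M (⟨i, j, hs, rfl⟩ | ⟨k, hbk, rfl⟩)
    · rcases hs with h | ⟨m, h1, h2, h3, hA, hB⟩
      · exact Submodule.mem_sup_left (omega_mem h)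
      · obtain ⟨m', rfl⟩ := Fin.exists_castSucc_eq.mpr ((hG.2.2.1 _ _ hA).2)
        refine Submodule.mem_sup_right (subset_span
          ⟨Omega i m', Omega m' j, omega_mem hA, omega_mem hB, ?_⟩)
        exact (br_oo (cs_ne' h1) (cs_ne' h2) (cs_ne' h3)).symm
    · rcases hbk with h | ⟨m, h1, h2, h3, ⟨hA, hB⟩ | ⟨hA, hB⟩⟩
      · exact Submodule.mem_sup_left (ecol_mem h)
      · obtain ⟨m', rfl⟩ := Fin.exists_castSucc_eq.mpr h2
        refine Submodule.mem_sup_right (subset_span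
          ⟨Omega k m', Ecol m', omega_mem hA, ecol_mem hB, ?_⟩)
        exact (br_oe (cs_ne' h1)).symm
      · exact absurd rfl (hG.2.2.1 _ _ hB).2

private lemma good_step {G : SBGraph n} (hG : G.Good) : G.step.Good := by
  obtain ⟨hss, hsn, hsl, hbs, hbn, hbl⟩ := hG
  refine ⟨?_, ?_, ?_, ?_, ?_, ?_⟩
  · rintro p q (h | ⟨j, h1, h2, h3, h4, h5⟩)
    · exact Or.inl (hss _ _ h)
    · exact Or.inr ⟨j, Ne.symm h2, Ne.symm h1, Ne.symm h3, hss _ _ h5, hss _ _ h4⟩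
  · rintro p q (h | ⟨j, h1, h2, h3, _, _⟩)
    · exact hsn _ _ h
    · exact h3
  · rintro p q (h | ⟨j, h1, h2, h3, h4, h5⟩)
    · exact hsl _ _ h
    · exact ⟨(hsl _ _ h4).1, (hsl _ _ h5).2⟩
  · rintro p q (h | ⟨j, h1, h2, h3, ⟨h4, h5⟩ | ⟨h4, h5⟩⟩)
    · exact Or.inl (hbs _ _ h)
    · exact Or.inr ⟨j, Ne.symm h2, Ne.symm h1, Ne.symm h3, Or.inr ⟨hbs _ _ h5, hss _ _ h4⟩⟩
    · exact Or.inr ⟨j, Ne.symm h2, Ne.symm h1, Ne.symm h3, Or.inl ⟨hss _ _ h5, hbs _ _ h4⟩⟩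
  · rintro p q (h | ⟨j, h1, h2, h3, _⟩)
    · exact hbn _ _ h
    · exact h3
  · rintro p q (h | ⟨j, h1, h2, h3, ⟨h4, h5⟩ | ⟨h4, h5⟩⟩)
    · exact hbl _ _ h
    · rcases hbl _ _ h5 with hj | hq
      · exact absurd hj (hsl _ _ h4).2
      · exact Or.inr hq
    · rcases hbl _ _ h4 with hp | hj
      · exact Or.inl hp
      · exact absurd hj (hsl _ _ h5).1

private lemma good_pattern {Λ : Set (Fin (n + 1) × Fin (n + 1))} (hΛ : IndexSet Λ) :
    (patternGraph Λ).Good := by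
  refine ⟨?_, ?_, ?_, ?_, ?_, ?_⟩
  · rintro p q ⟨i, j, hm, ⟨rfl, rfl⟩ | ⟨rfl, rfl⟩⟩
    · exact ⟨i, j, hm, Or.inr ⟨rfl, rfl⟩⟩
    · exact ⟨i, j, hm, Or.inl ⟨rfl, rfl⟩⟩
  · rintro p q ⟨i, j, hm, ⟨rfl, rfl⟩ | ⟨rfl, rfl⟩⟩
    · exact (hΛ _ hm).ne
    · exact (hΛ _ hm).ne'
  · rintro p q ⟨i, j, hm, ⟨rfl, rfl⟩ | ⟨rfl, rfl⟩⟩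
    · exact ⟨cs_ne_last i, cs_ne_last j⟩
    · exact ⟨cs_ne_last j, cs_ne_last i⟩
  · rintro p q ⟨k, hm, ⟨rfl, rfl⟩ | ⟨rfl, rfl⟩⟩
    · exact ⟨k, hm, Or.inr ⟨rfl, rfl⟩⟩
    · exact ⟨k, hm, Or.inl ⟨rfl, rfl⟩⟩
  · rintro p q ⟨k, hm, ⟨rfl, rfl⟩ | ⟨rfl, rfl⟩⟩
    · exact cs_ne_last k
    · exact last_ne_cs k
  · rintro p q ⟨k, hm, ⟨rfl, rfl⟩ | ⟨rfl, rfl⟩⟩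
    · exact Or.inr rfl
    · exact Or.inl rfl

private lemma BLam_eq_spanG {Λ : Set (Fin (n + 1) × Fin (n + 1))} :
    BLam Λ = spanG (patternGraph Λ) := by
  apply le_antisymm
  · rw [BLam, Submodule.span_le]
    rintro M (⟨i, j, hm, rfl⟩ | ⟨k, hm, rfl⟩)
    · exact subset_span (Or.inl ⟨i, j, ⟨i, j, hm, Or.inl ⟨rfl, rfl⟩⟩, rfl⟩)
    · exact subset_span (Or.inr ⟨k, ⟨k, hm, Or.inl ⟨rfl, rfl⟩⟩, rfl⟩)
  · rw [Submodule.span_le]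
    rintro M (⟨i, j, ⟨i', j', hm, ⟨hi, hj⟩ | ⟨hi, hj⟩⟩, rfl⟩ |
      ⟨k, ⟨k', hm, ⟨hk, _⟩ | ⟨hk, _⟩⟩, rfl⟩)
    · obtain rfl : i = i' := Fin.castSucc_injective _ hi
      obtain rfl : j = j' := Fin.castSucc_injective _ hj
      exact subset_span (Or.inl ⟨i, j, hm, rfl⟩)
    · obtain rfl : i = j' := Fin.castSucc_injective _ hi
      obtain rfl : j = i' := Fin.castSucc_injective _ hj
      rw [omega_swap]
      exact neg_mem (subset_span (Or.inl ⟨_, _, hm, rfl⟩))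
    · obtain rfl : k = k' := Fin.castSucc_injective _ hk
      exact subset_span (Or.inr ⟨k, hm, rfl⟩)
    · exact absurd hk (cs_ne_last k)

private def walkN (R : Fin (n + 1) → Fin (n + 1) → Prop) :
    ℕ → Fin (n + 1) → Fin (n + 1) → Prop
  | 0, p, q => p = q
  | (m + 1), p, q => ∃ r, R p r ∧ walkN R m r q

private lemma walkN_zero {R : Fin (n + 1) → Fin (n + 1) → Prop} {p q : Fin (n + 1)} :
    walkN R 0 p q ↔ p = q := Iff.rfl

private lemma walkN_succ {R : Fin (n + 1) → Fin (n + 1) → Prop} {m : ℕ}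
    {p q : Fin (n + 1)} :
    walkN R (m + 1) p q ↔ ∃ r, R p r ∧ walkN R m r q := Iff.rfl

private lemma walkN_concat {R : Fin (n + 1) → Fin (n + 1) → Prop} :
    ∀ {m1 m2 : ℕ} {p r q : Fin (n + 1)},
      walkN R m1 p r → walkN R m2 r q → walkN R (m1 + m2) p q := by
  intro m1
  induction m1 with
  | zero =>
    intro m2 p r q h1 h2
    obtain rfl : p = r := h1
    rw [Nat.zero_add]
    exact h2
  | succ k ih =>
    intro m2 p r q h1 h2
    obtain ⟨s, hs, hw⟩ := h1
    rw [Nat.succ_add]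
    exact ⟨s, hs, ih hw h2⟩

private lemma walkN_split {R : Fin (n + 1) → Fin (n + 1) → Prop} :
    ∀ {m1 m2 : ℕ} {p q : Fin (n + 1)}, walkN R (m1 + m2) p q →
      ∃ r, walkN R m1 p r ∧ walkN R m2 r q := by
  intro m1
  induction m1 with
  | zero =>
    intro m2 p q h
    rw [Nat.zero_add] at h
    exact ⟨p, walkN_zero.mpr rfl, h⟩
  | succ k ih =>
    intro m2 p q h
    rw [Nat.succ_add] at h
    obtain ⟨s, hs, hw⟩ := h
    obtain ⟨r, h1, h2⟩ := ih hw
    exact ⟨r, ⟨s, hs, h1⟩, h2⟩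

private lemma walkN_shorten {R : Fin (n + 1) → Fin (n + 1) → Prop}
    (hsym : ∀ p q, R p q → R q p) (hirr : ∀ p q, R p q → p ≠ q)
    {m : ℕ} {p q : Fin (n + 1)} (hw : walkN R m p q) (hpq : p ≠ q) :
    ∃ m', 1 ≤ m' ∧ m' ≤ n ∧ walkN R m' p q := by
  let G' : SimpleGraph (Fin (n + 1)) :=
    { Adj := R
      symm := ⟨fun a b h => hsym a b h⟩
      loopless := ⟨fun a h => hirr a a h rfl⟩ }
  have toW : ∀ {m : ℕ} {p q : Fin (n + 1)}, walkN R m p q → Nonempty (G'.Walk p q) := by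
    intro m
    induction m with
    | zero =>
      intro p q h
      obtain rfl : p = q := h
      exact ⟨SimpleGraph.Walk.nil⟩
    | succ k ih =>
      rintro p q ⟨r, hr, hw⟩
      obtain ⟨w⟩ := ih hw
      exact ⟨SimpleGraph.Walk.cons hr w⟩
  have back : ∀ {u v : Fin (n + 1)} (w : G'.Walk u v), walkN R w.length u v := by
    intro u v w
    induction w with
    | nil => exact walkN_zero.mpr rfl
    | cons h w ih =>
      rw [SimpleGraph.Walk.length_cons]
      exact ⟨_, h, ih⟩
  obtain ⟨w⟩ := toW hw
  have hp := SimpleGraph.Walk.bypass_isPath w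
  have hlt : w.bypass.length < n + 1 := by
    simpa using hp.length_lt
  refine ⟨w.bypass.length, ?_, by omega, back w.bypass⟩
  rcases Nat.eq_zero_or_pos w.bypass.length with h0 | h1
  · exact absurd (SimpleGraph.Walk.eq_of_length_eq_zero h0) hpq
  · exact h1

private lemma closure_succ (G : SBGraph n) (l : ℕ) :
    G.closure (l + 1) = (G.closure l).step :=
  Function.iterate_succ_apply' _ _ _

private lemma good_closure {G : SBGraph n} (hG : G.Good) (l : ℕ) :
    (G.closure l).Good := by
  induction l with
  | zero => exact hG
  | succ k ih => rw [closure_succ]; exact good_step ih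

private lemma two_pow_succ_eq (l : ℕ) : 2 ^ (l + 1) = 2 ^ l + 2 ^ l := by
  rw [pow_succ, Nat.mul_two]

private lemma solid_char {G : SBGraph n} (hG : G.Good) :
    ∀ (l : ℕ) (p q : Fin (n + 1)), (G.closure l).solid p q ↔
      (p ≠ q ∧ ∃ m, 1 ≤ m ∧ m ≤ 2 ^ l ∧ walkN G.solid m p q) := by
  intro l
  induction l with
  | zero =>
    intro p q
    constructor
    · intro h
      exact ⟨hG.2.1 _ _ h, 1, le_refl 1, by norm_num, ⟨q, h, walkN_zero.mpr rfl⟩⟩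
    · rintro ⟨hpq, m, h1, h2, hw⟩
      have h2' : m ≤ 1 := by simpa using h2
      obtain rfl : m = 1 := le_antisymm h2' h1
      obtain ⟨r, hr, hrq⟩ := hw
      obtain rfl : r = q := hrq
      exact hr
  | succ l ih =>
    intro p q
    rw [closure_succ]
    constructor
    · rintro (h | ⟨j, h1, h2, h3, h4, h5⟩)
      · obtain ⟨hpq, m, hm1, hm2, hw⟩ := (ih p q).mp h
        exact ⟨hpq, m, hm1,
          hm2.trans (Nat.pow_le_pow_right (by norm_num) (Nat.le_succ l)), hw⟩
      · obtain ⟨_, m1, hm11, hm12, hw1⟩ := (ih p j).mp h4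
        obtain ⟨_, m2, hm21, hm22, hw2⟩ := (ih j q).mp h5
        refine ⟨h3, m1 + m2, le_trans hm11 (Nat.le_add_right _ _), ?_,
          walkN_concat hw1 hw2⟩
        have := two_pow_succ_eq l
        omega
    · rintro ⟨hpq, m, hm1, hm2, hw⟩
      by_cases hsmall : m ≤ 2 ^ l
      · exact Or.inl ((ih p q).mpr ⟨hpq, m, hm1, hsmall, hw⟩)
      · push_neg at hsmall
        have hpos : 0 < 2 ^ l := Nat.two_pow_pos l
        have hm : m = (m - 2 ^ l) + 2 ^ l := by omega
        rw [hm] at hw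
        obtain ⟨r, hw1, hw2⟩ := walkN_split hw
        have hsp := two_pow_succ_eq l
        by_cases hrp : r = p
        · subst hrp
          exact Or.inl ((ih r q).mpr ⟨hpq, 2 ^ l, hpos, le_refl _, hw2⟩)
        · by_cases hrq : r = q
          · subst hrq
            exact Or.inl ((ih p r).mpr ⟨hpq, m - 2 ^ l, by omega, by omega, hw1⟩)
          · exact Or.inr ⟨r, Ne.symm hrp, hrq, hpq,
              (ih p r).mpr ⟨Ne.symm hrp, m - 2 ^ l, by omega, by omega, hw1⟩,
              (ih r q).mpr ⟨hrq, 2 ^ l, hpos, le_refl _, hw2⟩⟩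

private lemma broken_char {G : SBGraph n} (hG : G.Good) :
    ∀ (l : ℕ) (p : Fin (n + 1)), (G.closure l).broken p (Fin.last n) ↔
      ∃ m r, m + 1 ≤ 2 ^ l ∧ walkN G.solid m p r ∧ G.broken r (Fin.last n) := by
  intro l
  induction l with
  | zero =>
    intro p
    constructor
    · intro h
      exact ⟨0, p, by norm_num, walkN_zero.mpr rfl, h⟩
    · rintro ⟨m, r, h1, hw, hb⟩
      have h1' : m + 1 ≤ 1 := by simpa using h1
      obtain rfl : m = 0 := by omega
      obtain rfl : p = r := hw
      exact hb
  | succ l ih =>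
    intro p
    rw [closure_succ]
    have hGl := good_closure hG l
    constructor
    · rintro (h | ⟨j, h1, h2, h3, ⟨h4, h5⟩ | ⟨h4, h5⟩⟩)
      · obtain ⟨m, r, hm, hw, hb⟩ := (ih p).mp h
        exact ⟨m, r, hm.trans (Nat.pow_le_pow_right (by norm_num) (Nat.le_succ l)),
          hw, hb⟩
      · obtain ⟨_, m1, hm11, hm12, hw1⟩ := (solid_char hG l p j).mp h4
        obtain ⟨m2, r, hm2, hw2, hb⟩ := (ih j).mp h5
        refine ⟨m1 + m2, r, ?_, walkN_concat hw1 hw2, hb⟩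
        have := two_pow_succ_eq l
        omega
      · rcases hGl.2.2.2.2.2 _ _ h4 with hpl | hjl
        · exact absurd hpl h3
        · exact absurd hjl h2
    · rintro ⟨m, r, hm, hw, hb⟩
      by_cases hsmall : m + 1 ≤ 2 ^ l
      · exact Or.inl ((ih p).mpr ⟨m, r, hsmall, hw, hb⟩)
      · push_neg at hsmall
        have hpos : 0 < 2 ^ l := Nat.two_pow_pos l
        have hsp := two_pow_succ_eq l
        have hm' : m = (m - (2 ^ l - 1)) + (2 ^ l - 1) := by omega
        rw [hm'] at hw
        obtain ⟨r', hw1, hw2⟩ := walkN_split hw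
        have hbl' : (G.closure l).broken r' (Fin.last n) :=
          (ih r').mpr ⟨2 ^ l - 1, r, by omega, hw2, hb⟩
        by_cases hr'p : r' = p
        · subst hr'p
          exact Or.inl hbl'
        · have hsol : (G.closure l).solid p r' := (solid_char hG l p r').mpr
            ⟨Ne.symm hr'p, m - (2 ^ l - 1), by omega, by omega, hw1⟩
          exact Or.inr ⟨r', Ne.symm hr'p, (hGl.2.2.1 _ _ hsol).2,
            (hGl.2.2.1 _ _ hsol).1, Or.inl ⟨hsol, hbl'⟩⟩

private lemma stab_solid {G : SBGraph n} (hG : G.Good) (p q : Fin (n + 1)) :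
    (G.closure (n + 1)).solid p q ↔ (G.closure n).solid p q := by
  rw [solid_char hG, solid_char hG]
  constructor
  · rintro ⟨hpq, m, h1, h2, hw⟩
    obtain ⟨m', hm1, hm2, hw'⟩ := walkN_shorten hG.1 hG.2.1 hw hpq
    have hlt : n < 2 ^ n := Nat.lt_two_pow_self
    exact ⟨hpq, m', hm1, by omega, hw'⟩
  · rintro ⟨hpq, m, h1, h2, hw⟩
    exact ⟨hpq, m, h1,
      h2.trans (Nat.pow_le_pow_right (by norm_num) (Nat.le_succ n)), hw⟩

private lemma stab_broken {G : SBGraph n} (hG : G.Good) (hn : 1 ≤ n)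
    (p : Fin (n + 1)) :
    (G.closure (n + 1)).broken p (Fin.last n) ↔
      (G.closure n).broken p (Fin.last n) := by
  rw [broken_char hG, broken_char hG]
  constructor
  · rintro ⟨m, r, h1, hw, hb⟩
    by_cases hpr : p = r
    · subst hpr
      exact ⟨0, p, by have := Nat.two_pow_pos n; omega, walkN_zero.mpr rfl, hb⟩
    · obtain ⟨m', hm1, hm2, hw'⟩ := walkN_shorten hG.1 hG.2.1 hw hpr
      have hlt : n < 2 ^ n := Nat.lt_two_pow_self
      exact ⟨m', r, by omega, hw', hb⟩
  · rintro ⟨m, r, h1, hw, hb⟩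
    have : (2 : ℕ) ^ n ≤ 2 ^ (n + 1) :=
      Nat.pow_le_pow_right (by norm_num) (Nat.le_succ n)
    exact ⟨m, r, by omega, hw, hb⟩

private lemma gset_congr {G1 G2 : SBGraph n}
    (hs : ∀ i j : Fin n, G1.solid i.castSucc j.castSucc ↔ G2.solid i.castSucc j.castSucc)
    (hb : ∀ k : Fin n, G1.broken k.castSucc (Fin.last n) ↔
      G2.broken k.castSucc (Fin.last n)) :
    gset G1 = gset G2 := by
  ext M
  constructor <;> rintro (⟨i, j, h, rfl⟩ | ⟨k, h, rfl⟩)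
  · exact Or.inl ⟨i, j, (hs i j).mp h, rfl⟩
  · exact Or.inr ⟨k, (hb k).mp h, rfl⟩
  · exact Or.inl ⟨i, j, (hs i j).mpr h, rfl⟩
  · exact Or.inr ⟨k, (hb k).mpr h, rfl⟩

private lemma derivedIter_succ (D : Submodule ℝ (Mat n)) (k : ℕ) :
    derivedIter D (k + 1) = derivedStep (derivedIter D k) :=
  Function.iterate_succ_apply' _ _ _

private lemma derivedIter_eq {Λ : Set (Fin (n + 1) × Fin (n + 1))}
    (hΛ : IndexSet Λ) (l : ℕ) :
    derivedIter (BLam Λ) l = spanG ((patternGraph Λ).closure l) := by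
  induction l with
  | zero => exact BLam_eq_spanG
  | succ k ih =>
    rw [derivedIter_succ, ih, derivedStep_spanG (good_closure (good_pattern hΛ) k),
      closure_succ]

private lemma derivedIter_mono (D : Submodule ℝ (Mat n)) (l : ℕ) :
    D ≤ derivedIter D l := by
  induction l with
  | zero => exact le_refl D
  | succ k ih =>
    rw [derivedIter_succ]
    exact ih.trans le_sup_left

end Stmt6Aux


/-- For D⁽⁰⁾ = B_Λ, the derived distributions stabilize after n steps:
`D⁽ⁿ⁾ = D⁽ⁿ⁺¹⁾`, and `D⁽ⁿ⁾` equals the Lie subalgebra generated by B_Λ (the smallest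
real subspace containing B_Λ and closed under the bracket). -/
theorem stmt6 (n : ℕ) (hn : 1 ≤ n) (Λ : Set (Fin (n + 1) × Fin (n + 1)))
    (hΛ : IndexSet Λ) :
    derivedIter (BLam Λ) n = derivedIter (BLam Λ) (n + 1) ∧
    (derivedIter (BLam Λ) n : Set (Mat n)) =
      (LieSubalgebra.lieSpan ℝ (Mat n) (BLam Λ : Set (Mat n)) : Set (Mat n)) := by
  have hG := Stmt6Aux.good_pattern hΛ
  have hgs : Stmt6Aux.gset ((patternGraph Λ).closure (n + 1)) =
      Stmt6Aux.gset ((patternGraph Λ).closure n) :=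
    Stmt6Aux.gset_congr (fun i j => Stmt6Aux.stab_solid hG _ _)
      (fun k => Stmt6Aux.stab_broken hG hn _)
  have part1 : derivedIter (BLam Λ) n = derivedIter (BLam Λ) (n + 1) := by
    rw [Stmt6Aux.derivedIter_eq hΛ n, Stmt6Aux.derivedIter_eq hΛ (n + 1)]
    exact (congrArg (Submodule.span ℝ) hgs).symm
  refine ⟨part1, ?_⟩
  have hclosed : ∀ x ∈ derivedIter (BLam Λ) n, ∀ y ∈ derivedIter (BLam Λ) n,
      x * y - y * x ∈ derivedIter (BLam Λ) n := by
    intro x hx y hy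
    have h1 : x * y - y * x ∈ derivedStep (derivedIter (BLam Λ) n) :=
      Submodule.mem_sup_right (Submodule.subset_span ⟨x, y, hx, hy, rfl⟩)
    rwa [← Stmt6Aux.derivedIter_succ, ← part1] at h1
  set L := LieSubalgebra.lieSpan ℝ (Mat n) (BLam Λ : Set (Mat n)) with hL
  have hsub : ∀ l, derivedIter (BLam Λ) l ≤ (L : Submodule ℝ (Mat n)) := by
    intro l
    induction l with
    | zero =>
      intro x hx
      exact (LieSubalgebra.mem_toSubmodule L).mpr (LieSubalgebra.subset_lieSpan hx)
    | succ k ih =>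
      rw [Stmt6Aux.derivedIter_succ]
      refine sup_le ih ((Submodule.span_le).mpr ?_)
      rintro M ⟨A, B, hA, hB, rfl⟩
      have hAB : ⁅A, B⁆ ∈ L :=
        L.lie_mem ((LieSubalgebra.mem_toSubmodule L).mp (ih hA))
          ((LieSubalgebra.mem_toSubmodule L).mp (ih hB))
      rw [Ring.lie_def] at hAB
      exact (LieSubalgebra.mem_toSubmodule L).mpr hAB
  let K : LieSubalgebra ℝ (Mat n) :=
    { toSubmodule := derivedIter (BLam Λ) n
      lie_mem' := fun {x y} hx hy => by
        have := hclosed x hx y hy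
        rw [Ring.lie_def]
        exact this }
  have hLK : L ≤ K := by
    rw [hL]
    apply (LieSubalgebra.lieSpan_le).mpr
    intro x hx
    exact Stmt6Aux.derivedIter_mono (BLam Λ) n hx
  refine Set.Subset.antisymm ?_ ?_
  · intro x hx
    exact hsub n hx
  · intro x hx
    exact hLK hx
end

section
/- Let Λ be an index set. The Lie subalgebra generated by B_Λ (the smallest real subspace containing B_Λ and closed under the bracket) equals se(n) if and only if the n-th transitive closure of the graph G(B_Λ) is the complete graph on the (n+1) vertices {1,...,n+1}, i.e., every pair of distinct vertices is joined by a (solid or broken) edge of G^{(n)}. -/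
open Matrix

attribute [local instance 100] LieRing.ofAssociativeRing

/-! ### Auxiliary material for the proof -/

namespace Stmt7Aux

variable {n : ℕ}

lemma csl (i : Fin n) : i.castSucc ≠ Fin.last n := (Fin.castSucc_lt_last i).ne

lemma cs_ne {i j : Fin n} (h : i ≠ j) : i.castSucc ≠ j.castSucc :=
  fun hc => h (Fin.castSucc_injective n hc)

lemma std_mul (a b c d : Fin (n + 1)) :
    Matrix.single a b (1 : ℝ) * Matrix.single c d 1 =
      if b = c then Matrix.single a d 1 else 0 := by
  split_ifs with h
  · subst h; simpa using Matrix.single_mul_single_same a b (1 : ℝ) d 1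
  · exact Matrix.single_mul_single_of_ne (c := (1 : ℝ)) a b c h 1

lemma omega_neg (i j : Fin n) : Omega j i = -Omega i j := by
  simp [Omega, neg_sub]

lemma omega_self (i : Fin n) : Omega i i = 0 := by simp [Omega]

lemma lie_omega_omega {i j k : Fin n} (hij : i ≠ j) (hjk : j ≠ k) (hik : i ≠ k) :
    ⁅Omega i j, Omega j k⁆ = Omega i k := by
  simp only [Ring.lie_def, Omega, sub_mul, mul_sub, std_mul,
    if_pos rfl, if_neg (cs_ne hij), if_neg (cs_ne hjk), if_neg (cs_ne hik),
    if_neg (cs_ne hij.symm), if_neg (cs_ne hjk.symm), if_neg (cs_ne hik.symm)]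
  abel

lemma lie_omega_omega_zero {i j a b : Fin n} (hia : i ≠ a) (hib : i ≠ b)
    (hja : j ≠ a) (hjb : j ≠ b) : ⁅Omega i j, Omega a b⁆ = 0 := by
  simp only [Ring.lie_def, Omega, sub_mul, mul_sub, std_mul,
    if_neg (cs_ne hia), if_neg (cs_ne hib), if_neg (cs_ne hja), if_neg (cs_ne hjb),
    if_neg (cs_ne hia.symm), if_neg (cs_ne hib.symm), if_neg (cs_ne hja.symm),
    if_neg (cs_ne hjb.symm)]
  abel

lemma lie_omega_ecol {i j : Fin n} (hij : i ≠ j) : ⁅Omega i j, Ecol j⁆ = Ecol i := by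
  simp only [Ring.lie_def, Omega, Ecol, sub_mul, mul_sub, std_mul,
    if_pos rfl, if_neg (cs_ne hij), if_neg (cs_ne hij.symm),
    if_neg (csl i).symm, if_neg (csl j).symm, if_neg (csl j)]
  abel

lemma lie_omega_ecol_zero {i j k : Fin n} (hki : k ≠ i) (hkj : k ≠ j) :
    ⁅Omega i j, Ecol k⁆ = 0 := by
  simp only [Ring.lie_def, Omega, Ecol, sub_mul, mul_sub, std_mul,
    if_neg (cs_ne hki), if_neg (cs_ne hkj), if_neg (cs_ne hki.symm), if_neg (cs_ne hkj.symm),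
    if_neg (csl i).symm, if_neg (csl j).symm]
  abel

lemma lie_ecol_ecol (a b : Fin n) : ⁅Ecol a, Ecol b⁆ = 0 := by
  simp only [Ring.lie_def, Ecol, std_mul, if_neg (csl b).symm, if_neg (csl a).symm]
  abel

lemma omega_apply (i j : Fin n) (p q : Fin (n + 1)) :
    Omega i j p q = (if p = i.castSucc ∧ q = j.castSucc then (1 : ℝ) else 0) -
      (if p = j.castSucc ∧ q = i.castSucc then 1 else 0) := by
  simp only [Omega, Matrix.sub_apply, Matrix.single, Matrix.of_apply]
  congr 1 <;> simp [eq_comm, and_comm]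

lemma ecol_apply (k : Fin n) (p q : Fin (n + 1)) :
    Ecol k p q = if p = k.castSucc ∧ q = Fin.last n then (1 : ℝ) else 0 := by
  simp only [Ecol, Matrix.single, Matrix.of_apply]
  congr 1; simp [eq_comm, and_comm]

lemma omega_mem (i j : Fin n) : Omega i j ∈ seSet n := by
  constructor
  · intro q
    rw [omega_apply]
    rw [if_neg (fun h => (csl i).symm h.1), if_neg (fun h => (csl j).symm h.1), sub_zero]
  · intro a b
    rw [omega_apply, omega_apply]
    simp only [Fin.castSucc_inj]
    by_cases h1 : a = i ∧ b = j <;> by_cases h2 : a = j ∧ b = i <;>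
      simp [h1, h2, and_comm] <;> ring_nf <;> simp [h1, h2]

lemma ecol_mem (k : Fin n) : Ecol k ∈ seSet n := by
  constructor
  · intro q
    rw [ecol_apply, if_neg (fun h => (csl k).symm h.1)]
  · intro a b
    rw [ecol_apply, ecol_apply]
    rw [if_neg (fun h => (csl b) h.2), if_neg (fun h => (csl a) h.2), neg_zero]

/-- `se(n)` as a Lie subalgebra. -/
def seLie (n : ℕ) : LieSubalgebra ℝ (Mat n) :=
  { seL n with
    lie_mem' := by
      rintro x y ⟨hx1, hx2⟩ ⟨hy1, hy2⟩
      constructor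
      · intro j
        simp [Ring.lie_def, Matrix.sub_apply, Matrix.mul_apply, hx1, hy1]
      · intro i j
        simp only [Ring.lie_def, Matrix.sub_apply, Matrix.mul_apply]
        rw [Fin.sum_univ_castSucc, Fin.sum_univ_castSucc, Fin.sum_univ_castSucc,
          Fin.sum_univ_castSucc]
        simp only [hx1, hy1, mul_zero, add_zero]
        rw [← Finset.sum_sub_distrib, neg_sub, ← Finset.sum_sub_distrib]
        refine Finset.sum_congr rfl fun a _ => ?_
        rw [hy2 j a, hx2 a i, hx2 j a, hy2 a i]
        ring }

lemma mem_seLie_iff (M : Mat n) : M ∈ seLie n ↔ M ∈ seSet n := Iff.rfl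

lemma double_ite (f : Fin n → Fin n → ℝ) (a b : Fin n) :
    (∑ x : Fin n, ∑ y : Fin n, if a = x then if b = y then f x y else 0 else 0) = f a b := by
  have h : ∀ x : Fin n, (∑ y : Fin n, if a = x then if b = y then f x y else 0 else 0) =
      if a = x then f x b else 0 := by
    intro x
    split_ifs with h
    · simp [Finset.sum_ite_eq]
    · simp
  rw [Finset.sum_congr rfl (fun x _ => h x)]
  simp [Finset.sum_ite_eq]

lemma se_decomp (M : Mat n) (hM : M ∈ seSet n) :
    M = (∑ i : Fin n, ∑ j : Fin n, ((1 / 2 : ℝ) * M i.castSucc j.castSucc) • Omega i j) +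
      ∑ k : Fin n, M k.castSucc (Fin.last n) • Ecol k := by
  obtain ⟨h1, h2⟩ := hM
  ext p q
  simp only [Matrix.add_apply, Matrix.sum_apply, Matrix.smul_apply, omega_apply, ecol_apply,
    smul_eq_mul]
  have hL : ∀ i : Fin n, (Fin.last n = i.castSucc) = False :=
    fun i => eq_false (Ne.symm (csl i))
  induction p using Fin.lastCases with
  | last => simp [hL, h1 q]
  | cast a =>
    induction q using Fin.lastCases with
    | last =>
      simp only [hL, False.elim, and_false, false_and, if_false, Fin.castSucc_inj,
        and_true, mul_ite, mul_one, mul_zero, sub_zero, eq_self_iff_true, if_true]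
      simp [Finset.sum_ite_eq]
    | cast b =>
      have hL2 : (b.castSucc = Fin.last n) = False := eq_false (csl b)
      simp only [Fin.castSucc_inj, hL2, and_false, if_false, Finset.sum_const_zero, add_zero,
        mul_sub, mul_ite, mul_one, mul_zero, Finset.sum_sub_distrib, ite_and]
      rw [double_ite, Finset.sum_comm, double_ite, h2 b a]
      ring

section Graph

variable {G : SBGraph n}

lemma closure_zero (G : SBGraph n) : G.closure 0 = G := rfl

lemma closure_succ (G : SBGraph n) (l : ℕ) :
    G.closure (l + 1) = (G.closure l).step := Function.iterate_succ_apply' _ _ _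

lemma step_good (hG : G.Good) : G.step.Good := by
  obtain ⟨h1, h2, h3, h4, h5, h6⟩ := hG
  refine ⟨?_, ?_, ?_, ?_, ?_, ?_⟩
  · rintro p q (h | ⟨j, hpj, hjq, hpq, ha, hb⟩)
    · exact Or.inl (h1 _ _ h)
    · exact Or.inr ⟨j, Ne.symm hjq, Ne.symm hpj, Ne.symm hpq, h1 _ _ hb, h1 _ _ ha⟩
  · rintro p q (h | ⟨j, _, _, hpq, _, _⟩)
    · exact h2 _ _ h
    · exact hpq
  · rintro p q (h | ⟨j, _, _, _, ha, hb⟩)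
    · exact h3 _ _ h
    · exact ⟨(h3 _ _ ha).1, (h3 _ _ hb).2⟩
  · rintro p q (h | ⟨j, hpj, hjq, hpq, (⟨ha, hb⟩ | ⟨ha, hb⟩)⟩)
    · exact Or.inl (h4 _ _ h)
    · exact Or.inr ⟨j, Ne.symm hjq, Ne.symm hpj, Ne.symm hpq, Or.inr ⟨h4 _ _ hb, h1 _ _ ha⟩⟩
    · exact Or.inr ⟨j, Ne.symm hjq, Ne.symm hpj, Ne.symm hpq, Or.inl ⟨h1 _ _ hb, h4 _ _ ha⟩⟩
  · rintro p q (h | ⟨j, _, _, hpq, _⟩)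
    · exact h5 _ _ h
    · exact hpq
  · rintro p q (h | ⟨j, hpj, hjq, hpq, (⟨ha, hb⟩ | ⟨ha, hb⟩)⟩)
    · exact h6 _ _ h
    · rcases h6 _ _ hb with h | h
      · exact absurd h (h3 _ _ ha).2
      · exact Or.inr h
    · rcases h6 _ _ ha with h | h
      · exact Or.inl h
      · exact absurd h (h3 _ _ hb).1

lemma closure_good (hG : G.Good) (l : ℕ) : (G.closure l).Good := by
  induction l with
  | zero => exact hG
  | succ l ih => rw [closure_succ]; exact step_good ih

lemma closure_mono_solid {l m : ℕ} (h : l ≤ m) {p q} (hs : (G.closure l).solid p q) :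
    (G.closure m).solid p q := by
  induction m with
  | zero => exact (Nat.le_zero.mp h) ▸ hs
  | succ m ih =>
    rcases Nat.lt_or_ge l (m + 1) with h' | h'
    · rw [closure_succ]; exact Or.inl (ih (Nat.lt_succ_iff.mp h'))
    · exact (Nat.le_antisymm h h') ▸ hs

lemma closure_mono_broken {l m : ℕ} (h : l ≤ m) {p q} (hs : (G.closure l).broken p q) :
    (G.closure m).broken p q := by
  induction m with
  | zero => exact (Nat.le_zero.mp h) ▸ hs
  | succ m ih =>
    rcases Nat.lt_or_ge l (m + 1) with h' | h'
    · rw [closure_succ]; exact Or.inl (ih (Nat.lt_succ_iff.mp h'))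
    · exact (Nat.le_antisymm h h') ▸ hs

lemma pattern_good {Λ : Set (Fin (n + 1) × Fin (n + 1))} (hΛ : IndexSet Λ) :
    (patternGraph Λ).Good := by
  refine ⟨?_, ?_, ?_, ?_, ?_, ?_⟩
  · rintro p q ⟨i, j, hm, h | h⟩
    · exact ⟨i, j, hm, Or.inr ⟨h.2, h.1⟩⟩
    · exact ⟨i, j, hm, Or.inl ⟨h.2, h.1⟩⟩
  · rintro p q ⟨i, j, hm, (⟨rfl, rfl⟩ | ⟨rfl, rfl⟩)⟩
    · exact (hΛ _ hm).ne
    · exact (hΛ _ hm).ne'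
  · rintro p q ⟨i, j, hm, (⟨rfl, rfl⟩ | ⟨rfl, rfl⟩)⟩
    · exact ⟨csl i, csl j⟩
    · exact ⟨csl j, csl i⟩
  · rintro p q ⟨k, hm, h | h⟩
    · exact ⟨k, hm, Or.inr ⟨h.2, h.1⟩⟩
    · exact ⟨k, hm, Or.inl ⟨h.2, h.1⟩⟩
  · rintro p q ⟨k, hm, (⟨rfl, rfl⟩ | ⟨rfl, rfl⟩)⟩
    · exact csl k
    · exact (csl k).symm
  · rintro p q ⟨k, hm, (⟨rfl, rfl⟩ | ⟨rfl, rfl⟩)⟩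
    · exact Or.inr rfl
    · exact Or.inl rfl

end Graph

section ClosureMem

variable {Λ : Set (Fin (n + 1) × Fin (n + 1))}

/-- Edges of the `l`-th closure give elements of the Lie span. -/
lemma closure_mem (hΛ : IndexSet Λ) (l : ℕ) :
    (∀ i j : Fin n, ((patternGraph Λ).closure l).solid i.castSucc j.castSucc →
      Omega i j ∈ LieSubalgebra.lieSpan ℝ (Mat n) (BLam Λ : Set (Mat n))) ∧
    (∀ k : Fin n, ((patternGraph Λ).closure l).broken k.castSucc (Fin.last n) →
      Ecol k ∈ LieSubalgebra.lieSpan ℝ (Mat n) (BLam Λ : Set (Mat n))) := by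
  induction l with
  | zero =>
    constructor
    · rintro i j ⟨i', j', hm, (⟨hi, hj⟩ | ⟨hi, hj⟩)⟩
      · obtain rfl : i = i' := Fin.castSucc_injective n hi
        obtain rfl : j = j' := Fin.castSucc_injective n hj
        exact LieSubalgebra.subset_lieSpan (Submodule.subset_span (Or.inl ⟨i, j, hm, rfl⟩))
      · obtain rfl : i = j' := Fin.castSucc_injective n hi
        obtain rfl : j = i' := Fin.castSucc_injective n hj
        rw [omega_neg]
        exact neg_mem (LieSubalgebra.subset_lieSpan (Submodule.subset_span
          (Or.inl ⟨j, i, hm, rfl⟩)))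
    · rintro k ⟨k', hm, (⟨hk, _⟩ | ⟨hk, _⟩)⟩
      · obtain rfl : k = k' := Fin.castSucc_injective n hk
        exact LieSubalgebra.subset_lieSpan (Submodule.subset_span (Or.inr ⟨k, hm, rfl⟩))
      · exact absurd hk (csl k)
  | succ l ih =>
    have hg := closure_good (pattern_good hΛ) l
    constructor
    · intro i j hs
      rw [closure_succ] at hs
      rcases hs with hs | ⟨m, hne1, hne2, hne3, hs1, hs2⟩
      · exact ih.1 i j hs
      · have hm : m ≠ Fin.last n := (hg.2.2.1 _ _ hs2).1
        obtain ⟨a, rfl⟩ := Fin.exists_castSucc_eq.mpr hm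
        have hia : i ≠ a := fun h => hne1 (by rw [h])
        have haj : a ≠ j := fun h => hne2 (by rw [h])
        have hij : i ≠ j := fun h => hne3 (by rw [h])
        rw [← lie_omega_omega hia haj hij]
        exact LieSubalgebra.lie_mem _ (ih.1 i a hs1) (ih.1 a j hs2)
    · intro k hb
      rw [closure_succ] at hb
      rcases hb with hb | ⟨m, hne1, hne2, hne3, (⟨hs1, hb2⟩ | ⟨hb1, hs2⟩)⟩
      · exact ih.2 k hb
      · have hm : m ≠ Fin.last n := (hg.2.2.1 _ _ hs1).2
        obtain ⟨a, rfl⟩ := Fin.exists_castSucc_eq.mpr hm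
        have hka : k ≠ a := fun h => hne1 (by rw [h])
        rw [← lie_omega_ecol hka]
        exact LieSubalgebra.lie_mem _ (ih.1 k a hs1) (ih.2 a hb2)
      · exact absurd rfl (hg.2.2.1 _ _ hs2).2

end ClosureMem

section EdgeSpan

/-- The generators associated with the edges of a solid/broken graph. -/
def edgeSet (G : SBGraph n) : Set (Mat n) :=
  {M | (∃ i j : Fin n, G.solid i.castSucc j.castSucc ∧ M = Omega i j) ∨
    ∃ k : Fin n, G.broken k.castSucc (Fin.last n) ∧ M = Ecol k}

variable {G : SBGraph n}

lemma edge_bracket (hG : G.Good)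
    (hsol : ∀ p q, G.step.solid p q → G.solid p q)
    (hbrk : ∀ p q, G.step.broken p q → G.broken p q) :
    ∀ a ∈ edgeSet G, ∀ b ∈ edgeSet G, ⁅a, b⁆ ∈ Submodule.span ℝ (edgeSet G) := by
  have hne : ∀ {i j : Fin n}, G.solid i.castSucc j.castSucc → i ≠ j :=
    fun {i j} h he => hG.2.1 _ _ h (by rw [he])
  have hOE : ∀ (i j k : Fin n), G.solid i.castSucc j.castSucc →
      G.broken k.castSucc (Fin.last n) →
      ⁅Omega i j, Ecol k⁆ ∈ Submodule.span ℝ (edgeSet G) := by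
    intro i j k hij hk
    have hij' : i ≠ j := hne hij
    by_cases h1 : k = j
    · subst h1
      rw [lie_omega_ecol hij']
      refine Submodule.subset_span (Or.inr ⟨i, ?_, rfl⟩)
      exact hbrk _ _ (Or.inr ⟨k.castSucc, cs_ne hij', csl k, csl i, Or.inl ⟨hij, hk⟩⟩)
    · by_cases h2 : k = i
      · subst h2
        rw [omega_neg j k, neg_lie, lie_omega_ecol hij'.symm]
        refine neg_mem (Submodule.subset_span (Or.inr ⟨j, ?_, rfl⟩))
        exact hbrk _ _ (Or.inr ⟨k.castSucc, cs_ne hij'.symm, csl k, csl j,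
          Or.inl ⟨hG.1 _ _ hij, hk⟩⟩)
      · rw [lie_omega_ecol_zero h2 h1]
        exact zero_mem _
  rintro a (⟨i, j, hij, rfl⟩ | ⟨k, hk, rfl⟩) b (⟨i', j', hij', rfl⟩ | ⟨k', hk', rfl⟩)
  · -- Omega–Omega
    have hij0 : i ≠ j := hne hij
    have hij0' : i' ≠ j' := hne hij'
    by_cases h1 : j = i'
    · subst h1
      by_cases h2 : i = j'
      · subst h2
        rw [omega_neg i j, lie_neg, lie_self, neg_zero]
        exact zero_mem _
      · rw [lie_omega_omega hij0 hij0' h2]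
        refine Submodule.subset_span (Or.inl ⟨i, j', ?_, rfl⟩)
        exact hsol _ _ (Or.inr ⟨j.castSucc, cs_ne hij0, cs_ne hij0', cs_ne h2, hij, hij'⟩)
    · by_cases h3 : i = i'
      · subst h3
        by_cases h4 : j = j'
        · subst h4; rw [lie_self]; exact zero_mem _
        · rw [omega_neg j i, neg_lie, lie_omega_omega hij0.symm hij0' h4]
          refine neg_mem (Submodule.subset_span (Or.inl ⟨j, j', ?_, rfl⟩))
          exact hsol _ _ (Or.inr ⟨i.castSucc, cs_ne hij0.symm, cs_ne hij0', cs_ne h4,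
            hG.1 _ _ hij, hij'⟩)
      · by_cases h5 : j = j'
        · subst h5
          rw [omega_neg j i', lie_neg, lie_omega_omega hij0 h1 h3]
          refine neg_mem (Submodule.subset_span (Or.inl ⟨i, i', ?_, rfl⟩))
          exact hsol _ _ (Or.inr ⟨j.castSucc, cs_ne hij0, cs_ne h1, cs_ne h3,
            hij, hG.1 _ _ hij'⟩)
        · by_cases h6 : i = j'
          · subst h6
            rw [show ⁅Omega i j, Omega i' i⁆ = -⁅Omega i' i, Omega i j⁆ from
              (lie_skew _ _).symm,
              lie_omega_omega (fun h => h3 h.symm) hij0 (fun h => h1 h.symm)]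
            refine neg_mem (Submodule.subset_span (Or.inl ⟨i', j, ?_, rfl⟩))
            exact hsol _ _ (Or.inr ⟨i.castSucc, cs_ne (fun h => h3 h.symm), cs_ne hij0,
              cs_ne (fun h => h1 h.symm), hij', hij⟩)
          · rw [lie_omega_omega_zero h3 h6 h1 h5]
            exact zero_mem _
  · exact hOE i j k' hij hk'
  · rw [show ⁅Ecol k, Omega i' j'⁆ = -⁅Omega i' j', Ecol k⁆ from (lie_skew _ _).symm]
    exact neg_mem (hOE i' j' k hij' hk)
  · rw [lie_ecol_ecol]; exact zero_mem _

lemma span_lie_closed {s : Set (Mat n)}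
    (h : ∀ a ∈ s, ∀ b ∈ s, ⁅a, b⁆ ∈ Submodule.span ℝ s) :
    ∀ x ∈ Submodule.span ℝ s, ∀ y ∈ Submodule.span ℝ s, ⁅x, y⁆ ∈ Submodule.span ℝ s := by
  have h1 : ∀ a ∈ s, ∀ y ∈ Submodule.span ℝ s, ⁅(a : Mat n), y⁆ ∈ Submodule.span ℝ s := by
    intro a ha y hy
    induction hy using Submodule.span_induction with
    | mem b hb => exact h a ha b hb
    | zero => rw [lie_zero]; exact zero_mem _
    | add u v hu hv ihu ihv => rw [lie_add]; exact add_mem ihu ihv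
    | smul c u hu ihu => rw [lie_smul]; exact Submodule.smul_mem _ _ ihu
  intro x hx y hy
  induction hx using Submodule.span_induction with
  | mem a ha => exact h1 a ha y hy
  | zero => rw [zero_lie]; exact zero_mem _
  | add u v hu hv ihu ihv => rw [add_lie]; exact add_mem ihu ihv
  | smul c u hu ihu => rw [smul_lie]; exact Submodule.smul_mem _ _ ihu

end EdgeSpan

section Walks

variable {G : SBGraph n}

/-- The simple graph on the solid edges of a Good graph. -/
def toSimple (G : SBGraph n) (hG : G.Good) : SimpleGraph (Fin (n + 1)) where
  Adj := G.solid
  symm := ⟨fun p q h => hG.1 p q h⟩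
  loopless := ⟨fun p h => hG.2.1 p p h rfl⟩

lemma walk_closure (hG : G.Good) :
    ∀ (L : ℕ) (p q : Fin (n + 1)), p ≠ q → ∀ w : (toSimple G hG).Walk p q,
      w.length ≤ L → (G.closure L).solid p q := by
  intro L
  induction L with
  | zero =>
    intro p q hpq w hw
    cases w with
    | nil => exact absurd rfl hpq
    | cons h w' => simp [SimpleGraph.Walk.length_cons] at hw
  | succ L ih =>
    intro p q hpq w hw
    cases w with
    | nil => exact absurd rfl hpq
    | @cons _ v _ h w' =>
      by_cases hv : v = q
      · subst hv
        exact closure_mono_solid (Nat.zero_le _) h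
      · have h1 : (G.closure L).solid v q := by
          refine ih v q hv w' ?_
          rw [SimpleGraph.Walk.length_cons] at hw
          omega
        have h2 : (G.closure L).solid p v := closure_mono_solid (Nat.zero_le L) h
        rw [closure_succ]
        exact Or.inr ⟨v, h.ne, hv, hpq, h2, h1⟩

lemma support_ne_last (hG : G.Good) {p q : Fin (n + 1)}
    (w : (toSimple G hG).Walk p q) :
    ∀ v ∈ w.support, v = p ∨ v ≠ Fin.last n := by
  induction w with
  | nil => intro v hv; rw [SimpleGraph.Walk.support_nil, List.mem_singleton] at hv; exact Or.inl hv
  | @cons u b _ h w ih =>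
    intro v hv
    rw [SimpleGraph.Walk.support_cons, List.mem_cons] at hv
    rcases hv with rfl | hv
    · exact Or.inl rfl
    · rcases ih v hv with rfl | hv'
      · exact Or.inr (hG.2.2.1 _ _ h).2
      · exact Or.inr hv'

lemma path_bound (hG : G.Good) {p q : Fin (n + 1)} (hp : p ≠ Fin.last n)
    (w : (toSimple G hG).Walk p q) (hw : w.support.Nodup) : w.length + 1 ≤ n := by
  have hsub : w.support.toFinset ⊆ Finset.univ.erase (Fin.last n) := by
    intro v hv
    rw [List.mem_toFinset] at hv
    refine Finset.mem_erase.mpr ⟨?_, Finset.mem_univ v⟩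
    rcases support_ne_last hG w v hv with rfl | h
    · exact hp
    · exact h
  have h1 : w.support.toFinset.card = w.support.length := List.toFinset_card_of_nodup hw
  have h2 : (Finset.univ.erase (Fin.last n)).card = n := by
    rw [Finset.card_erase_of_mem (Finset.mem_univ _)]
    simp
  have h3 := Finset.card_le_card hsub
  rw [h1, h2, SimpleGraph.Walk.length_support] at h3
  exact h3

lemma reach_closure (hG : G.Good) {p q : Fin (n + 1)} (hp : p ≠ Fin.last n)
    (hpq : p ≠ q) (hr : (toSimple G hG).Reachable p q) :
    ∃ L, L + 1 ≤ n ∧ (G.closure L).solid p q := by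
  obtain ⟨w⟩ := hr
  exact ⟨w.bypass.length,
    path_bound hG hp w.bypass w.bypass_isPath.support_nodup,
    walk_closure hG _ p q hpq w.bypass le_rfl⟩

/-- Vertices from which the last vertex is "broken-reachable". -/
def Bset (G : SBGraph n) (hG : G.Good) (p : Fin (n + 1)) : Prop :=
  ∃ w : Fin n, G.broken w.castSucc (Fin.last n) ∧ (toSimple G hG).Reachable p w.castSucc

/-- The limit graph: solid edges are reachability, broken edges are broken-reachability. -/
def Hgraph (G : SBGraph n) (hG : G.Good) : SBGraph n where
  solid p q := p ≠ q ∧ p ≠ Fin.last n ∧ q ≠ Fin.last n ∧ (toSimple G hG).Reachable p q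
  broken p q := (p = Fin.last n ∧ q ≠ Fin.last n ∧ Bset G hG q) ∨
    (q = Fin.last n ∧ p ≠ Fin.last n ∧ Bset G hG p)

lemma H_good (hG : G.Good) : (Hgraph G hG).Good := by
  refine ⟨?_, ?_, ?_, ?_, ?_, ?_⟩
  · rintro p q ⟨h1, h2, h3, h4⟩; exact ⟨h1.symm, h3, h2, h4.symm⟩
  · rintro p q ⟨h1, _, _, _⟩; exact h1
  · rintro p q ⟨_, h2, h3, _⟩; exact ⟨h2, h3⟩
  · rintro p q (⟨h1, h2, h3⟩ | ⟨h1, h2, h3⟩)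
    · exact Or.inr ⟨h1, h2, h3⟩
    · exact Or.inl ⟨h1, h2, h3⟩
  · rintro p q (⟨h1, h2, _⟩ | ⟨h1, h2, _⟩)
    · exact fun he => h2 (he ▸ h1)
    · exact fun he => h2 (he.trans h1)
  · rintro p q (⟨h1, _, _⟩ | ⟨h1, _, _⟩)
    · exact Or.inl h1
    · exact Or.inr h1

lemma H_step_solid (hG : G.Good) :
    ∀ p q, (Hgraph G hG).step.solid p q → (Hgraph G hG).solid p q := by
  rintro p q (h | ⟨j, hpj, hjq, hpq, ⟨_, hp, _, hr1⟩, ⟨_, _, hq, hr2⟩⟩)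
  · exact h
  · exact ⟨hpq, hp, hq, hr1.trans hr2⟩

lemma H_step_broken (hG : G.Good) :
    ∀ p q, (Hgraph G hG).step.broken p q → (Hgraph G hG).broken p q := by
  rintro p q (h | ⟨j, hpj, hjq, hpq, (⟨⟨_, hp, hj, hr⟩, hb⟩ | ⟨hb, ⟨_, hj, hq, hr⟩⟩)⟩)
  · exact h
  · rcases hb with ⟨hj', _, _⟩ | ⟨hq', _, hBj⟩
    · exact absurd hj' hj
    · obtain ⟨w, hw, hrw⟩ := hBj
      exact Or.inr ⟨hq', hp, ⟨w, hw, hr.trans hrw⟩⟩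
  · rcases hb with ⟨hp', _, hBj⟩ | ⟨hj', _, _⟩
    · obtain ⟨w, hw, hrw⟩ := hBj
      exact Or.inl ⟨hp', hq, ⟨w, hw, hr.symm.trans hrw⟩⟩
    · exact absurd hj' hj

lemma H_contains_solid (hG : G.Good) {p q} (h : G.solid p q) : (Hgraph G hG).solid p q :=
  ⟨hG.2.1 _ _ h, (hG.2.2.1 _ _ h).1, (hG.2.2.1 _ _ h).2,
    SimpleGraph.Adj.reachable (show (toSimple G hG).Adj p q from h)⟩

lemma H_contains_broken (hG : G.Good) {p q} (h : G.broken p q) : (Hgraph G hG).broken p q := by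
  rcases hG.2.2.2.2.2 _ _ h with rfl | rfl
  · have hq : q ≠ Fin.last n := (hG.2.2.2.2.1 _ _ h).symm
    obtain ⟨k, rfl⟩ := Fin.exists_castSucc_eq.mpr hq
    exact Or.inl ⟨rfl, hq, ⟨k, hG.2.2.2.1 _ _ h, SimpleGraph.Reachable.refl _⟩⟩
  · have hp : p ≠ Fin.last n := hG.2.2.2.2.1 _ _ h
    obtain ⟨k, rfl⟩ := Fin.exists_castSucc_eq.mpr hp
    exact Or.inr ⟨rfl, hp, ⟨k, h, SimpleGraph.Reachable.refl _⟩⟩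

lemma H_to_closure_solid (hG : G.Good) (hn : 1 ≤ n) {p q}
    (h : (Hgraph G hG).solid p q) : (G.closure n).solid p q := by
  obtain ⟨hpq, hp, _, hr⟩ := h
  obtain ⟨L, hL, hs⟩ := reach_closure hG hp hpq hr
  exact closure_mono_solid (by omega) hs

lemma H_to_closure_broken (hG : G.Good) (hn : 1 ≤ n) {k : Fin n}
    (h : (Hgraph G hG).broken k.castSucc (Fin.last n)) :
    (G.closure n).broken k.castSucc (Fin.last n) := by
  rcases h with ⟨hk, _, _⟩ | ⟨_, _, hB⟩
  · exact absurd hk (csl k)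
  · obtain ⟨w, hw, hr⟩ := hB
    by_cases hkw : k = w
    · subst hkw
      exact closure_mono_broken (Nat.zero_le _) hw
    · obtain ⟨L, hL, hs⟩ := reach_closure hG (csl k) (cs_ne hkw) hr
      refine closure_mono_broken (show L + 1 ≤ n from hL) ?_
      rw [closure_succ]
      exact Or.inr ⟨w.castSucc, cs_ne hkw, csl w, csl k,
        Or.inl ⟨hs, closure_mono_broken (Nat.zero_le _) hw⟩⟩

end Walks

section Extract

/-- Evaluation of an entry as a linear map. -/
def entryLM (p q : Fin (n + 1)) : Mat n →ₗ[ℝ] ℝ where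
  toFun M := M p q
  map_add' := fun _ _ => rfl
  map_smul' := fun _ _ => rfl

lemma span_entry_zero {s : Set (Mat n)} {p q : Fin (n + 1)}
    (h : ∀ M ∈ s, M p q = 0) {x : Mat n} (hx : x ∈ Submodule.span ℝ s) : x p q = 0 := by
  induction hx using Submodule.span_induction with
  | mem b hb => exact h b hb
  | zero => rfl
  | add u v hu hv ihu ihv => rw [Matrix.add_apply, ihu, ihv, add_zero]
  | smul c u hu ihu => rw [Matrix.smul_apply, ihu, smul_zero]

lemma extract_solid {H : SBGraph n} (hsym : ∀ p q, H.solid p q → H.solid q p)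
    {i j : Fin n} (hij : i ≠ j) (h : Omega i j ∈ Submodule.span ℝ (edgeSet H)) :
    H.solid i.castSucc j.castSucc := by
  by_contra hns
  have hns' : ¬H.solid j.castSucc i.castSucc := fun h' => hns (hsym _ _ h')
  have h0 : Omega i j i.castSucc j.castSucc = 0 := by
    refine span_entry_zero ?_ h
    rintro M (⟨a, b, hab, rfl⟩ | ⟨k, hk, rfl⟩)
    · rw [omega_apply]
      rw [if_neg, if_neg, sub_zero]
      · rintro ⟨h1, h2⟩
        obtain rfl : b = i := Fin.castSucc_injective n h1.symm
        obtain rfl : a = j := Fin.castSucc_injective n h2.symm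
        exact hns' hab
      · rintro ⟨h1, h2⟩
        obtain rfl : a = i := Fin.castSucc_injective n h1.symm
        obtain rfl : b = j := Fin.castSucc_injective n h2.symm
        exact hns hab
    · rw [ecol_apply, if_neg]
      rintro ⟨_, h2⟩
      exact csl j h2
  rw [omega_apply, if_pos ⟨rfl, rfl⟩, if_neg (fun hc => cs_ne hij hc.1)] at h0
  norm_num at h0

lemma extract_broken {H : SBGraph n} {k : Fin n}
    (h : Ecol k ∈ Submodule.span ℝ (edgeSet H)) : H.broken k.castSucc (Fin.last n) := by
  by_contra hnb
  have h0 : Ecol k k.castSucc (Fin.last n) = 0 := by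
    refine span_entry_zero ?_ h
    rintro M (⟨a, b, hab, rfl⟩ | ⟨m, hm, rfl⟩)
    · rw [omega_apply]
      rw [if_neg (fun hc => csl b hc.2.symm), if_neg (fun hc => csl a hc.2.symm), sub_zero]
    · rw [ecol_apply, if_neg]
      rintro ⟨h1, _⟩
      obtain rfl : m = k := Fin.castSucc_injective n h1.symm
      exact hnb hm
  rw [ecol_apply, if_pos ⟨rfl, rfl⟩] at h0
  norm_num at h0

end Extract

end Stmt7Aux

/-- The Lie subalgebra generated by B_Λ equals se(n) if and only if
the n-th transitive closure of G(B_Λ) is the complete graph on the n+1 vertices. -/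
theorem stmt7 (n : ℕ) (hn : 1 ≤ n) (Λ : Set (Fin (n + 1) × Fin (n + 1)))
    (hΛ : IndexSet Λ) :
    GeneratesSE n Λ ↔ ((patternGraph Λ).closure n).IsComplete := by
  classical
  have hG := Stmt7Aux.pattern_good hΛ
  constructor
  · intro hgen
    have hH := Stmt7Aux.H_good hG
    have hbr := Stmt7Aux.edge_bracket hH (Stmt7Aux.H_step_solid hG) (Stmt7Aux.H_step_broken hG)
    have hclosed := Stmt7Aux.span_lie_closed hbr
    let K : LieSubalgebra ℝ (Mat n) :=
      { Submodule.span ℝ (Stmt7Aux.edgeSet (Stmt7Aux.Hgraph (patternGraph Λ) hG)) with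
        lie_mem' := fun {x y} hx hy => hclosed x hx y hy }
    have hgsub : genSet Λ ⊆ Stmt7Aux.edgeSet (Stmt7Aux.Hgraph (patternGraph Λ) hG) := by
      rintro M (⟨i, j, hm, rfl⟩ | ⟨k, hm, rfl⟩)
      · exact Or.inl ⟨i, j, Stmt7Aux.H_contains_solid hG ⟨i, j, hm, Or.inl ⟨rfl, rfl⟩⟩, rfl⟩
      · exact Or.inr ⟨k, Stmt7Aux.H_contains_broken hG ⟨k, hm, Or.inl ⟨rfl, rfl⟩⟩, rfl⟩
    have hgsub' : genSet Λ ⊆ (K.toSubmodule : Set (Mat n)) := fun m hm =>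
      show m ∈ Submodule.span ℝ _ from Submodule.subset_span (hgsub hm)
    have hle : LieSubalgebra.lieSpan ℝ (Mat n) (BLam Λ : Set (Mat n)) ≤ K :=
      LieSubalgebra.lieSpan_le.mpr (fun x hx => Submodule.span_le.mpr hgsub' hx)
    have hmem : ∀ M : Mat n, M ∈ seSet n →
        M ∈ Submodule.span ℝ (Stmt7Aux.edgeSet (Stmt7Aux.Hgraph (patternGraph Λ) hG)) := by
      intro M hM
      have h1 : M ∈ (LieSubalgebra.lieSpan ℝ (Mat n) (BLam Λ : Set (Mat n)) :
          Set (Mat n)) := by rw [hgen]; exact hM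
      exact hle h1
    intro p q hpq
    by_cases hq : q = Fin.last n
    · subst hq
      obtain ⟨k, rfl⟩ := Fin.exists_castSucc_eq.mpr hpq
      exact Or.inr (Stmt7Aux.H_to_closure_broken hG hn
        (Stmt7Aux.extract_broken (hmem _ (Stmt7Aux.ecol_mem k))))
    · by_cases hp : p = Fin.last n
      · subst hp
        obtain ⟨k, rfl⟩ := Fin.exists_castSucc_eq.mpr hq
        have h3 := Stmt7Aux.H_to_closure_broken hG hn
          (Stmt7Aux.extract_broken (hmem _ (Stmt7Aux.ecol_mem k)))
        exact Or.inr ((Stmt7Aux.closure_good hG n).2.2.2.1 _ _ h3)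
      · obtain ⟨i, rfl⟩ := Fin.exists_castSucc_eq.mpr hp
        obtain ⟨j, rfl⟩ := Fin.exists_castSucc_eq.mpr hq
        have hij : i ≠ j := fun h => hpq (by rw [h])
        exact Or.inl (Stmt7Aux.H_to_closure_solid hG hn
          (Stmt7Aux.extract_solid hH.1 hij (hmem _ (Stmt7Aux.omega_mem i j))))
  · intro hcomp
    have hsub : BLam Λ ≤ (Stmt7Aux.seLie n).toSubmodule :=
      Submodule.span_le.mpr (by
        rintro M (⟨i, j, hm, rfl⟩ | ⟨k, hm, rfl⟩)
        · exact Stmt7Aux.omega_mem i j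
        · exact Stmt7Aux.ecol_mem k)
    apply Set.Subset.antisymm
    · have hK : LieSubalgebra.lieSpan ℝ (Mat n) (BLam Λ : Set (Mat n)) ≤ Stmt7Aux.seLie n :=
        LieSubalgebra.lieSpan_le.mpr (fun x hx => hsub hx)
      exact fun x hx => hK hx
    · intro M hM
      rw [SetLike.mem_coe, ← LieSubalgebra.mem_toSubmodule]
      rw [Stmt7Aux.se_decomp M hM]
      refine Submodule.add_mem _
        (Submodule.sum_mem _ fun i _ => Submodule.sum_mem _ fun j _ =>
          Submodule.smul_mem _ _ ?_)
        (Submodule.sum_mem _ fun k _ => Submodule.smul_mem _ _ ?_)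
      · by_cases hij : i = j
        · subst hij; rw [Stmt7Aux.omega_self]; exact Submodule.zero_mem _
        · rcases hcomp i.castSucc j.castSucc (Stmt7Aux.cs_ne hij) with hs | hb
          · exact (LieSubalgebra.mem_toSubmodule _).mpr
              ((Stmt7Aux.closure_mem hΛ n).1 i j hs)
          · rcases (Stmt7Aux.closure_good hG n).2.2.2.2.2 _ _ hb with h | h
            · exact absurd h (Stmt7Aux.csl i)
            · exact absurd h (Stmt7Aux.csl j)
      · rcases hcomp k.castSucc (Fin.last n) (Stmt7Aux.csl k) with hs | hb
        · exact absurd ((Stmt7Aux.closure_good hG n).2.2.1 _ _ hs).2 (fun h => h rfl)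
        · exact (LieSubalgebra.mem_toSubmodule _).mpr
            ((Stmt7Aux.closure_mem hΛ n).2 k hb)
end

section
/- Let Λ be an index set. The Lie subalgebra generated by B_Λ (the smallest real subspace containing B_Λ and closed under the bracket) equals se(n) if and only if both of the following hold: the undirected simple graph on vertex set {1,...,n+1} with edge set {{i,j} : (i,j) ∈ Λ} is connected, and the undirected simple graph on vertex set {1,...,n} with edge set {{i,j} : (i,j) ∈ Λ, j ≤ n} is connected. -/
open Matrix

attribute [local instance] LieRing.ofAssociativeRing

namespace Stmt8Aux
variable {n : ℕ}

lemma cs_ne_last (i : Fin n) : (i.castSucc : Fin (n+1)) ≠ Fin.last n := (Fin.castSucc_lt_last i).ne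

lemma omega_apply (i j : Fin n) (a b : Fin (n+1)) :
    Omega i j a b = (if i.castSucc = a ∧ j.castSucc = b then (1:ℝ) else 0)
      - (if j.castSucc = a ∧ i.castSucc = b then 1 else 0) := by
  simp [Omega, Matrix.single, Matrix.sub_apply]

lemma ecol_apply (k : Fin n) (a b : Fin (n+1)) :
    Ecol k a b = (if k.castSucc = a ∧ Fin.last n = b then (1:ℝ) else 0) := by
  simp [Ecol, Matrix.single]

lemma omega_mem_se (i j : Fin n) : Omega i j ∈ seSet n := by
  constructor
  · intro b
    simp [omega_apply, cs_ne_last]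
  · intro a b
    simp only [omega_apply]
    rw [neg_sub]
    congr 1 <;> simp [and_comm]

lemma ecol_mem_se (k : Fin n) : Ecol k ∈ seSet n := by
  constructor
  · intro b
    simp [ecol_apply, cs_ne_last]
  · intro a b
    simp [ecol_apply, (cs_ne_last a).symm, (cs_ne_last b).symm]

lemma br_omega (i p j : Fin n) (hip : i ≠ p) (hpj : p ≠ j) (hij : i ≠ j) :
    ⁅Omega i p, Omega p j⁆ = Omega i j := by
  have h1 : (i.castSucc : Fin (n+1)) ≠ p.castSucc := fun h => hip (Fin.castSucc_injective _ h)
  have h2 : (p.castSucc : Fin (n+1)) ≠ j.castSucc := fun h => hpj (Fin.castSucc_injective _ h)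
  have h3 : (i.castSucc : Fin (n+1)) ≠ j.castSucc := fun h => hij (Fin.castSucc_injective _ h)
  rw [Ring.lie_def]
  simp only [Omega, sub_mul, mul_sub]
  rw [single_mul_single_same, single_mul_single_of_ne (h := h2.symm),
    single_mul_single_of_ne (h := h1),
    single_mul_single_of_ne (h := h3.symm),
    single_mul_single_of_ne (h := h3),
    single_mul_single_of_ne (h := h2),
    single_mul_single_same, single_mul_single_of_ne (h := h1.symm)]
  simp

lemma br_ecol (i j : Fin n) (hij : i ≠ j) : ⁅Omega i j, Ecol j⁆ = Ecol i := by
  have h1 : (i.castSucc : Fin (n+1)) ≠ j.castSucc := fun h => hij (Fin.castSucc_injective _ h)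
  rw [Ring.lie_def]
  simp only [Omega, Ecol, sub_mul, mul_sub]
  rw [single_mul_single_same, single_mul_single_of_ne (h := h1),
    single_mul_single_of_ne (h := (cs_ne_last i).symm),
    single_mul_single_of_ne (h := (cs_ne_last j).symm)]
  simp

/-- General pattern subspace used as an invariant. -/
def Wsub (r : Fin n → Fin n → Prop) (S : Set (Fin n)) : Submodule ℝ (Mat n) where
  carrier := {M | M ∈ seSet n ∧ (∀ i j, ¬ r i j → M i.castSucc j.castSucc = 0) ∧
    ∀ k, k ∉ S → M k.castSucc (Fin.last n) = 0}
  add_mem' := by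
    rintro a b ⟨⟨ha1, ha2⟩, ha3, ha4⟩ ⟨⟨hb1, hb2⟩, hb3, hb4⟩
    refine ⟨⟨fun j => ?_, fun i j => ?_⟩, fun i j h => ?_, fun k h => ?_⟩
    · simp [Matrix.add_apply, ha1 j, hb1 j]
    · simp only [Matrix.add_apply, ha2 i j, hb2 i j]; ring
    · simp [Matrix.add_apply, ha3 i j h, hb3 i j h]
    · simp [Matrix.add_apply, ha4 k h, hb4 k h]
  zero_mem' := by
    refine ⟨⟨fun j => ?_, fun i j => ?_⟩, fun i j h => ?_, fun k h => ?_⟩ <;> simp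
  smul_mem' := by
    rintro c a ⟨⟨ha1, ha2⟩, ha3, ha4⟩
    refine ⟨⟨fun j => ?_, fun i j => ?_⟩, fun i j h => ?_, fun k h => ?_⟩
    · simp [Matrix.smul_apply, ha1 j]
    · simp only [Matrix.smul_apply, ha2 i j, smul_neg]
    · simp [Matrix.smul_apply, ha3 i j h]
    · simp [Matrix.smul_apply, ha4 k h]

lemma mem_Wsub {r : Fin n → Fin n → Prop} {S : Set (Fin n)} {M : Mat n} :
    M ∈ Wsub r S ↔ M ∈ seSet n ∧ (∀ i j, ¬ r i j → M i.castSucc j.castSucc = 0) ∧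
      ∀ k, k ∉ S → M k.castSucc (Fin.last n) = 0 := Iff.rfl

lemma mul_apply_cs (A B : Mat n) (hB : ∀ b, B (Fin.last n) b = 0) (a b : Fin (n+1)) :
    (A * B) a b = ∑ p : Fin n, A a p.castSucc * B p.castSucc b := by
  rw [Matrix.mul_apply, Fin.sum_univ_castSucc]
  simp [hB]

lemma mul_cs_symm {A B : Mat n} (hA : A ∈ seSet n) (hB : B ∈ seSet n) (i j : Fin n) :
    (A * B) i.castSucc j.castSucc = (B * A) j.castSucc i.castSucc := by
  rw [mul_apply_cs A B hB.1, mul_apply_cs B A hA.1]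
  refine Finset.sum_congr rfl fun p _ => ?_
  rw [hB.2 j p, hA.2 p i]
  ring

lemma bracket_closed {r : Fin n → Fin n → Prop} {S : Set (Fin n)}
    (htr : ∀ i p j, r i p → r p j → r i j) (hS : ∀ k p, r k p → p ∈ S → k ∈ S)
    {A B : Mat n} (hA : A ∈ Wsub r S) (hB : B ∈ Wsub r S) :
    A * B - B * A ∈ Wsub r S := by
  obtain ⟨hAse, hA3, hA4⟩ := hA
  obtain ⟨hBse, hB3, hB4⟩ := hB
  have key : ∀ (C D : Mat n), C ∈ seSet n → D ∈ seSet n →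
      (∀ i j, ¬ r i j → C i.castSucc j.castSucc = 0) →
      (∀ k, k ∉ S → C k.castSucc (Fin.last n) = 0) →
      (∀ i j, ¬ r i j → D i.castSucc j.castSucc = 0) →
      (∀ k, k ∉ S → D k.castSucc (Fin.last n) = 0) →
      (∀ i j, ¬ r i j → (C * D) i.castSucc j.castSucc = 0) ∧
      (∀ k, k ∉ S → (C * D) k.castSucc (Fin.last n) = 0) := by
    intro C D hCse hDse hC3 hC4 hD3 hD4
    constructor
    · intro i j h
      rw [mul_apply_cs C D hDse.1]
      refine Finset.sum_eq_zero fun p _ => ?_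
      by_cases hip : r i p
      · have : ¬ r p j := fun hpj => h (htr i p j hip hpj)
        rw [hD3 p j this, mul_zero]
      · rw [hC3 i p hip, zero_mul]
    · intro k hk
      rw [mul_apply_cs C D hDse.1]
      refine Finset.sum_eq_zero fun p _ => ?_
      by_cases hp : p ∈ S
      · have : ¬ r k p := fun hr => hk (hS k p hr hp)
        rw [hC3 k p this, zero_mul]
      · rw [hD4 p hp, mul_zero]
  refine ⟨⟨fun b => ?_, fun i j => ?_⟩, fun i j h => ?_, fun k hk => ?_⟩
  · simp [Matrix.sub_apply, Matrix.mul_apply, hAse.1, hBse.1]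
  · simp only [Matrix.sub_apply]
    rw [mul_cs_symm hAse hBse i j, mul_cs_symm hBse hAse i j]
    ring
  · simp [Matrix.sub_apply, (key A B hAse hBse hA3 hA4 hB3 hB4).1 i j h,
      (key B A hBse hAse hB3 hB4 hA3 hA4).1 i j h]
  · simp [Matrix.sub_apply, (key A B hAse hBse hA3 hA4 hB3 hB4).2 k hk,
      (key B A hBse hAse hB3 hB4 hA3 hA4).2 k hk]

/-- `Wsub` as a Lie subalgebra. -/
def WLie (r : Fin n → Fin n → Prop) (S : Set (Fin n))
    (htr : ∀ i p j, r i p → r p j → r i j) (hS : ∀ k p, r k p → p ∈ S → k ∈ S) :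
    LieSubalgebra ℝ (Mat n) :=
  { Wsub r S with
    lie_mem' := fun {A B} hA hB => by
      rw [Ring.lie_def]; exact bracket_closed htr hS hA hB }

lemma mem_WLie {r : Fin n → Fin n → Prop} {S : Set (Fin n)} {htr} {hS} {M : Mat n} :
    M ∈ WLie r S htr hS ↔ M ∈ Wsub r S := Iff.rfl

lemma se_decomp {M : Mat n} (hM : M ∈ seSet n) :
    M = (∑ i : Fin n, ∑ j : Fin n, ((1/2 : ℝ) * M i.castSucc j.castSucc) • Omega i j)
      + ∑ k : Fin n, M k.castSucc (Fin.last n) • Ecol k := by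
  ext a b
  rw [Matrix.add_apply, Matrix.sum_apply, Matrix.sum_apply]
  simp only [Matrix.sum_apply, Matrix.smul_apply, omega_apply, ecol_apply, smul_eq_mul]
  induction a using Fin.lastCases with
  | last =>
    simp [cs_ne_last, hM.1]
  | cast i0 =>
    induction b using Fin.lastCases with
    | last =>
      simp [cs_ne_last, Fin.castSucc_inj, (fun i => (cs_ne_last i).symm : ∀ i : Fin n, _)]
    | cast j0 =>
      have hb : (Fin.last n : Fin (n+1)) ≠ j0.castSucc := (cs_ne_last j0).symm
      simp only [Fin.castSucc_inj, hb, and_false, if_false, mul_zero, Finset.sum_const_zero,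
        add_zero, mul_sub, mul_ite, mul_one]
      rw [show M i0.castSucc j0.castSucc =
          1/2 * M i0.castSucc j0.castSucc - 1/2 * M j0.castSucc i0.castSucc by
            rw [hM.2 j0 i0]; ring]
      simp [ite_and, Finset.sum_sub_distrib]

section MainAux
variable {n : ℕ} {Λ : Set (Fin (n + 1) × Fin (n + 1))}

/-- Small-graph adjacency gives big-graph adjacency. -/
lemma reach_big {i j : Fin n}
    (h : (SimpleGraph.fromRel (fun i j : Fin n => (i.castSucc, j.castSucc) ∈ Λ)).Reachable i j) :
    (SimpleGraph.fromRel (fun p q : Fin (n + 1) => (p, q) ∈ Λ)).Reachable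
      i.castSucc j.castSucc := by
  obtain ⟨w⟩ := h
  induction w with
  | nil => exact SimpleGraph.Reachable.refl _
  | cons h w ih =>
    rename_i u p v
    rcases (SimpleGraph.fromRel_adj _ _ _).1 h with ⟨hne, hor⟩
    have hadj : (SimpleGraph.fromRel (fun p q : Fin (n + 1) => (p, q) ∈ Λ)).Adj
        u.castSucc p.castSucc :=
      (SimpleGraph.fromRel_adj _ _ _).2
        ⟨fun hc => hne (Fin.castSucc_injective _ hc), hor⟩
    exact hadj.reachable.trans ih

lemma omega_mem_L {i j : Fin n}
    (h : (SimpleGraph.fromRel (fun i j : Fin n => (i.castSucc, j.castSucc) ∈ Λ)).Reachable i j) :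
    Omega i j ∈ LieSubalgebra.lieSpan ℝ (Mat n) (BLam Λ : Set (Mat n)) := by
  obtain ⟨w⟩ := h
  induction w with
  | nil => simpa [Omega] using (LieSubalgebra.lieSpan ℝ (Mat n) (BLam Λ : Set (Mat n))).zero_mem
  | cons h w ih =>
    rename_i u p v
    have hup : u ≠ p := h.ne
    have hA : Omega u p ∈ LieSubalgebra.lieSpan ℝ (Mat n) (BLam Λ : Set (Mat n)) := by
      rcases (SimpleGraph.fromRel_adj _ _ _).1 h with ⟨hne, hor⟩
      rcases hor with h1 | h1
      · exact LieSubalgebra.subset_lieSpan (Submodule.subset_span (Or.inl ⟨u, p, h1, rfl⟩))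
      · have hmem : Omega p u ∈ LieSubalgebra.lieSpan ℝ (Mat n) (BLam Λ : Set (Mat n)) :=
          LieSubalgebra.subset_lieSpan (Submodule.subset_span (Or.inl ⟨p, u, h1, rfl⟩))
        have heq : Omega u p = -Omega p u := by simp only [Omega, neg_sub]
        rw [heq]; exact neg_mem hmem
    by_cases hpv : p = v
    · subst hpv; exact hA
    by_cases huv : u = v
    · subst huv
      simpa [Omega] using (LieSubalgebra.lieSpan ℝ (Mat n) (BLam Λ : Set (Mat n))).zero_mem
    · have hbr := (LieSubalgebra.lieSpan ℝ (Mat n) (BLam Λ : Set (Mat n))).lie_mem hA ih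
      rwa [br_omega u p v hup hpv huv] at hbr

lemma ecol_mem_L {k k' : Fin n}
    (h : (SimpleGraph.fromRel (fun i j : Fin n => (i.castSucc, j.castSucc) ∈ Λ)).Reachable k k')
    (hk' : Ecol k' ∈ LieSubalgebra.lieSpan ℝ (Mat n) (BLam Λ : Set (Mat n))) :
    Ecol k ∈ LieSubalgebra.lieSpan ℝ (Mat n) (BLam Λ : Set (Mat n)) := by
  obtain ⟨w⟩ := h
  revert hk'
  induction w with
  | nil => exact id
  | cons h w ih =>
    rename_i u p v
    intro hv
    have hp := ih hv
    have hOm : Omega u p ∈ LieSubalgebra.lieSpan ℝ (Mat n) (BLam Λ : Set (Mat n)) :=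
      omega_mem_L h.reachable
    have hbr := (LieSubalgebra.lieSpan ℝ (Mat n) (BLam Λ : Set (Mat n))).lie_mem hOm hp
    rwa [br_ecol u p h.ne] at hbr

lemma first_edge (hL : IndexSet Λ) {v : Fin (n + 1)}
    (w : (SimpleGraph.fromRel (fun p q : Fin (n + 1) => (p, q) ∈ Λ)).Walk (Fin.last n) v)
    (hv : v ≠ Fin.last n) : ∃ k' : Fin n, (k'.castSucc, Fin.last n) ∈ Λ := by
  cases w with
  | nil => exact absurd rfl hv
  | cons h w =>
    rename_i q
    rcases (SimpleGraph.fromRel_adj _ _ _).1 h with ⟨hne, hor⟩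
    rcases hor with h1 | h1
    · exact absurd (hL _ h1) (not_lt.2 (Fin.le_last _))
    · obtain ⟨k', hk'⟩ := Fin.exists_castSucc_eq.2 (Ne.symm hne)
      subst hk'
      exact ⟨k', h1⟩

end MainAux

end Stmt8Aux

open Stmt8Aux in
/-- The Lie subalgebra generated by B_Λ equals se(n) if and only if
the graph on {1,…,n+1} with edge set {{i,j} : (i,j) ∈ Λ} is connected and the graph on
{1,…,n} with edge set {{i,j} : (i,j) ∈ Λ, j ≤ n} is connected. -/
theorem stmt8 (n : ℕ) (hn : 1 ≤ n) (Λ : Set (Fin (n + 1) × Fin (n + 1)))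
    (hΛ : IndexSet Λ) :
    GeneratesSE n Λ ↔
      ((SimpleGraph.fromRel (fun p q : Fin (n + 1) => (p, q) ∈ Λ)).Connected ∧
       (SimpleGraph.fromRel (fun i j : Fin n => (i.castSucc, j.castSucc) ∈ Λ)).Connected) := by
  classical
  set Gsm := SimpleGraph.fromRel (fun i j : Fin n => (i.castSucc, j.castSucc) ∈ Λ) with hGsm
  set Gbig := SimpleGraph.fromRel (fun p q : Fin (n + 1) => (p, q) ∈ Λ) with hGbig
  set L := LieSubalgebra.lieSpan ℝ (Mat n) (BLam Λ : Set (Mat n)) with hL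
  constructor
  · -- forward direction
    intro hgen
    set r : Fin n → Fin n → Prop := fun i j => Gsm.Reachable i j with hr
    set S : Set (Fin n) := {k | ∃ k', Gsm.Reachable k k' ∧ (k'.castSucc, Fin.last n) ∈ Λ}
      with hSdef
    have htr : ∀ i p j, r i p → r p j → r i j := fun i p j h1 h2 => h1.trans h2
    have hS : ∀ k p, r k p → p ∈ S → k ∈ S := by
      rintro k p hkp ⟨k', h1, h2⟩; exact ⟨k', hkp.trans h1, h2⟩
    have hgensub : genSet Λ ⊆ (Wsub r S : Set (Mat n)) := by
      rintro M (⟨i, j, hmem, rfl⟩ | ⟨k, hmem, rfl⟩)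
      · have hij : i ≠ j := by
          intro h; subst h; exact lt_irrefl _ (hΛ _ hmem)
        have hadj : Gsm.Adj i j := (SimpleGraph.fromRel_adj _ _ _).2 ⟨hij, Or.inl hmem⟩
        refine ⟨omega_mem_se i j, fun a b hab => ?_, fun k _ => ?_⟩
        · rw [omega_apply]
          have h1 : ¬ (i.castSucc = a.castSucc ∧ j.castSucc = b.castSucc) := by
            rintro ⟨e1, e2⟩
            rw [Fin.castSucc_inj] at e1 e2; subst e1; subst e2
            exact hab hadj.reachable
          have h2 : ¬ (j.castSucc = a.castSucc ∧ i.castSucc = b.castSucc) := by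
            rintro ⟨e1, e2⟩
            rw [Fin.castSucc_inj] at e1 e2; subst e1; subst e2
            exact hab hadj.symm.reachable
          rw [if_neg h1, if_neg h2, sub_zero]
        · simp [omega_apply, cs_ne_last]
      · refine ⟨ecol_mem_se k, fun a b _ => ?_, fun k'' hk'' => ?_⟩
        · simp [ecol_apply, (cs_ne_last b).symm]
        · rw [ecol_apply]
          have : ¬ (k.castSucc = k''.castSucc ∧ Fin.last n = Fin.last n) := by
            rintro ⟨e1, -⟩
            rw [Fin.castSucc_inj] at e1; subst e1
            exact hk'' ⟨k, SimpleGraph.Reachable.refl _, hmem⟩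
          rw [if_neg this]
    have hle : L ≤ WLie r S htr hS :=
      LieSubalgebra.lieSpan_le.2 (by
        intro M hM
        exact Submodule.span_le.2 hgensub hM)
    have hsubW : seSet n ⊆ (WLie r S htr hS : Set (Mat n)) := by
      intro M hM
      rw [← hgen] at hM
      exact hle hM
    have hsmallconn : Gsm.Connected := by
      haveI : Nonempty (Fin n) := ⟨⟨0, hn⟩⟩
      constructor
      intro i j
      by_cases hij : i = j
      · subst hij; exact SimpleGraph.Reachable.refl _
      · by_contra hreach
        have hmem := (hsubW (omega_mem_se i j)).2.1 i j hreach
        rw [omega_apply] at hmem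
        have h2 : ¬ (j.castSucc = i.castSucc ∧ i.castSucc = j.castSucc) := by
          rintro ⟨e1, -⟩; exact hij (Fin.castSucc_injective _ e1).symm
        rw [if_pos ⟨rfl, rfl⟩, if_neg h2, sub_zero] at hmem
        exact one_ne_zero hmem
    have hkey : ∀ i : Fin n, ∃ k', Gsm.Reachable i k' ∧ (k'.castSucc, Fin.last n) ∈ Λ := by
      intro i
      by_contra hns
      have hmem := (hsubW (ecol_mem_se i)).2.2 i hns
      rw [ecol_apply, if_pos ⟨rfl, rfl⟩] at hmem
      exact one_ne_zero hmem
    have hreachlast : ∀ p : Fin (n + 1), Gbig.Reachable p (Fin.last n) := by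
      intro p
      induction p using Fin.lastCases with
      | last => exact SimpleGraph.Reachable.refl _
      | cast i =>
        obtain ⟨k', hrch, hmem⟩ := hkey i
        have hadj : Gbig.Adj k'.castSucc (Fin.last n) :=
          (SimpleGraph.fromRel_adj _ _ _).2 ⟨cs_ne_last k', Or.inl hmem⟩
        exact (reach_big hrch).trans hadj.reachable
    exact ⟨⟨fun p q => (hreachlast p).trans (hreachlast q).symm⟩, hsmallconn⟩
  · -- backward direction
    rintro ⟨hbig, hsmall⟩
    apply Set.Subset.antisymm
    · -- lieSpan ⊆ seSet
      have hgensub : genSet Λ ⊆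
          (Wsub (fun _ _ : Fin n => True) (Set.univ) : Set (Mat n)) := by
        rintro M (⟨i, j, hmem, rfl⟩ | ⟨k, hmem, rfl⟩)
        · exact ⟨omega_mem_se i j, fun _ _ h => absurd trivial h,
            fun _ h => absurd (Set.mem_univ _) h⟩
        · exact ⟨ecol_mem_se k, fun _ _ h => absurd trivial h,
            fun _ h => absurd (Set.mem_univ _) h⟩
      have hle : L ≤ WLie (fun _ _ : Fin n => True) Set.univ
          (fun _ _ _ _ _ => trivial) (fun _ _ _ _ => trivial) :=
        LieSubalgebra.lieSpan_le.2 (by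
          intro M hM
          exact Submodule.span_le.2 hgensub hM)
      intro M hM
      exact ((hle hM : M ∈ Wsub _ _)).1
    · -- seSet ⊆ lieSpan
      intro M hM
      have hOm : ∀ i j : Fin n, Omega i j ∈ L := fun i j =>
        omega_mem_L (hsmall.preconnected i j)
      have hEk : ∃ k' : Fin n, (k'.castSucc, Fin.last n) ∈ Λ := by
        obtain ⟨w⟩ := hbig.preconnected (Fin.last n) (Fin.castSucc ⟨0, hn⟩)
        exact first_edge hΛ w (cs_ne_last (⟨0, hn⟩ : Fin n))
      obtain ⟨k', hk'mem⟩ := hEk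
      have hk' : Ecol k' ∈ L := LieSubalgebra.subset_lieSpan
        (Submodule.subset_span (Or.inr ⟨k', hk'mem, rfl⟩))
      have hEall : ∀ k : Fin n, Ecol k ∈ L := fun k =>
        ecol_mem_L (hsmall.preconnected k k') hk'
      show M ∈ L
      rw [se_decomp hM]
      exact add_mem
        (Submodule.sum_mem L.toSubmodule fun i _ =>
          Submodule.sum_mem L.toSubmodule fun j _ =>
            Submodule.smul_mem L.toSubmodule _ (hOm i j))
        (Submodule.sum_mem L.toSubmodule fun k _ =>
          Submodule.smul_mem L.toSubmodule _ (hEall k))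
end

section
/- Let G^{(0)} be an undirected simple graph on vertex set {1,...,n+1} whose edges are partitioned into a solid edge set E_s (edges with both endpoints in {1,...,n}) and a broken edge set E_b (edges with one endpoint equal to n+1). Then the n-th transitive closure G^{(n)} is the complete graph on {1,...,n+1} if and only if both of the following hold: the graph on {1,...,n+1} with edge set E_s ∪ E_b is connected, and the graph on {1,...,n} with edge set E_s is connected. -/
open Matrix

attribute [instance] LieRing.ofAssociativeRing

section Aux

variable {n : ℕ}

lemma sb_closure_zero (G : SBGraph n) : G.closure 0 = G := rfl

lemma sb_closure_succ (G : SBGraph n) (l : ℕ) :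
    G.closure (l + 1) = (G.closure l).step :=
  Function.iterate_succ_apply' _ _ _

lemma sb_good_step {G : SBGraph n} (hG : G.Good) : G.step.Good := by
  obtain ⟨hss, hsn, hsl, hbs, hbn, hbl⟩ := hG
  refine ⟨?_, ?_, ?_, ?_, ?_, ?_⟩
  · rintro p q (h | ⟨j, h1, h2, h3, h4, h5⟩)
    · exact Or.inl (hss _ _ h)
    · exact Or.inr ⟨j, h2.symm, h1.symm, h3.symm, hss _ _ h5, hss _ _ h4⟩
  · rintro p q (h | ⟨j, _, _, h3, _, _⟩)
    · exact hsn _ _ h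
    · exact h3
  · rintro p q (h | ⟨j, _, _, _, h4, h5⟩)
    · exact hsl _ _ h
    · exact ⟨(hsl _ _ h4).1, (hsl _ _ h5).2⟩
  · rintro p q (h | ⟨j, h1, h2, h3, (⟨h4, h5⟩ | ⟨h4, h5⟩)⟩)
    · exact Or.inl (hbs _ _ h)
    · exact Or.inr ⟨j, h2.symm, h1.symm, h3.symm, Or.inr ⟨hbs _ _ h5, hss _ _ h4⟩⟩
    · exact Or.inr ⟨j, h2.symm, h1.symm, h3.symm, Or.inl ⟨hss _ _ h5, hbs _ _ h4⟩⟩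
  · rintro p q (h | ⟨j, _, _, h3, _⟩)
    · exact hbn _ _ h
    · exact h3
  · rintro p q (h | ⟨j, _, _, _, (⟨h4, h5⟩ | ⟨h4, h5⟩)⟩)
    · exact hbl _ _ h
    · rcases hbl _ _ h5 with h' | h'
      · exact absurd h' (hsl _ _ h4).2
      · exact Or.inr h'
    · rcases hbl _ _ h4 with h' | h'
      · exact Or.inl h'
      · exact absurd h' (hsl _ _ h5).1

lemma sb_good_closure {G : SBGraph n} (hG : G.Good) (l : ℕ) : (G.closure l).Good := by
  induction l with
  | zero => exact hG
  | succ l ih => rw [sb_closure_succ]; exact sb_good_step ih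

lemma sb_closure_solid_mono (G : SBGraph n) {l m : ℕ} (h : l ≤ m) {p q}
    (hs : (G.closure l).solid p q) : (G.closure m).solid p q := by
  induction h with
  | refl => exact hs
  | step _ ih => rw [sb_closure_succ]; exact Or.inl ih

lemma sb_closure_broken_mono (G : SBGraph n) {l m : ℕ} (h : l ≤ m) {p q}
    (hb : (G.closure l).broken p q) : (G.closure m).broken p q := by
  induction h with
  | refl => exact hb
  | step _ ih => rw [sb_closure_succ]; exact Or.inl ih

/-- A solid walk of length `≤ l + 1` gives a solid edge in the `l`-th closure. -/
lemma sb_walk_solid {G : SBGraph n} (hG : G.Good) :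
    ∀ (l : ℕ) (i j : Fin n)
      (w : (SimpleGraph.fromRel (fun a b : Fin n => G.solid a.castSucc b.castSucc)).Walk i j),
      w.length ≤ l + 1 → i ≠ j → (G.closure l).solid i.castSucc j.castSucc := by
  intro l
  induction l with
  | zero =>
    intro i j w hw hij
    cases w with
    | nil => exact absurd rfl hij
    | @cons _ m _ h w' =>
      cases w' with
      | nil =>
        rw [SimpleGraph.fromRel_adj] at h
        rcases h.2 with h' | h'
        · exact h'
        · exact hG.1 _ _ h'
      | cons h2 w'' =>
        simp only [SimpleGraph.Walk.length_cons] at hw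
        omega
  | succ l ih =>
    intro i j w hw hij
    cases w with
    | nil => exact absurd rfl hij
    | @cons _ m _ h w' =>
      rw [SimpleGraph.fromRel_adj] at h
      have hs0 : G.solid i.castSucc m.castSucc := by
        rcases h.2 with h' | h'
        · exact h'
        · exact hG.1 _ _ h'
      by_cases hmj : m = j
      · subst hmj
        exact sb_closure_solid_mono G (Nat.zero_le _) hs0
      · have h1 : w'.length ≤ l + 1 := by
          simp only [SimpleGraph.Walk.length_cons] at hw; omega
        have hmc := ih m j w' h1 hmj
        have hs : (G.closure l).solid i.castSucc m.castSucc :=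
          sb_closure_solid_mono G (Nat.zero_le _) hs0
        rw [sb_closure_succ]
        refine Or.inr ⟨m.castSucc, ?_, ?_, ?_, hs, hmc⟩
        · exact fun e => h.1 (Fin.castSucc_inj.mp e)
        · exact fun e => hmj (Fin.castSucc_inj.mp e)
        · exact fun e => hij (Fin.castSucc_inj.mp e)

/-- Solid edges in any closure come from solid connectivity in the original graph. -/
lemma sb_solid_reach {G : SBGraph n} (hG : G.Good) (l : ℕ) :
    ∀ (i j : Fin n), (G.closure l).solid i.castSucc j.castSucc →
      (SimpleGraph.fromRel (fun a b : Fin n => G.solid a.castSucc b.castSucc)).Reachable i j := by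
  induction l with
  | zero =>
    intro i j h
    have hij : i ≠ j := fun e => hG.2.1 _ _ h (by rw [e])
    exact SimpleGraph.Adj.reachable (by rw [SimpleGraph.fromRel_adj]; exact ⟨hij, Or.inl h⟩)
  | succ l ih =>
    intro i j h
    rw [sb_closure_succ] at h
    rcases h with h | ⟨m, h1, h2, h3, h4, h5⟩
    · exact ih i j h
    · have hGl := sb_good_closure hG l
      have hm : m ≠ Fin.last n := (hGl.2.2.1 _ _ h4).2
      obtain ⟨m', rfl⟩ := Fin.exists_castSucc_eq.mpr hm
      exact (ih i m' h4).trans (ih m' j h5)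

/-- Any edge in any closure comes from connectivity in the original graph. -/
lemma sb_all_reach {G : SBGraph n} (hG : G.Good) (l : ℕ) :
    ∀ p q, (G.closure l).solid p q ∨ (G.closure l).broken p q →
      (SimpleGraph.fromRel (fun p q => G.solid p q ∨ G.broken p q)).Reachable p q := by
  induction l with
  | zero =>
    intro p q h
    have hpq : p ≠ q := by
      rcases h with h | h
      · exact hG.2.1 _ _ h
      · exact hG.2.2.2.2.1 _ _ h
    exact SimpleGraph.Adj.reachable (by rw [SimpleGraph.fromRel_adj]; exact ⟨hpq, Or.inl h⟩)
  | succ l ih =>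
    intro p q h
    rw [sb_closure_succ] at h
    rcases h with (h | ⟨m, _, _, _, h4, h5⟩) | (h | ⟨m, _, _, _, (⟨h4, h5⟩ | ⟨h4, h5⟩)⟩)
    · exact ih p q (Or.inl h)
    · exact (ih p m (Or.inl h4)).trans (ih m q (Or.inl h5))
    · exact ih p q (Or.inr h)
    · exact (ih p m (Or.inl h4)).trans (ih m q (Or.inr h5))
    · exact (ih p m (Or.inr h4)).trans (ih m q (Or.inl h5))

end Aux

/-- For a solid/broken graph G⁽⁰⁾ on {1,…,n+1}, the n-th transitive
closure is the complete graph iff the graph with edge set E_s ∪ E_b is connected and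
the graph on {1,…,n} with edge set E_s is connected. -/
theorem stmt9 (n : ℕ) (hn : 1 ≤ n) (G : SBGraph n) (hG : G.Good) :
    (G.closure n).IsComplete ↔
      ((SimpleGraph.fromRel (fun p q : Fin (n + 1) => G.solid p q ∨ G.broken p q)).Connected ∧
       (SimpleGraph.fromRel (fun i j : Fin n => G.solid i.castSucc j.castSucc)).Connected) := by
  constructor
  · intro hc
    constructor
    · rw [SimpleGraph.connected_iff]
      refine ⟨fun p q => ?_, ⟨Fin.last n⟩⟩
      by_cases hpq : p = q
      · subst hpq; exact SimpleGraph.Reachable.refl p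
      · exact sb_all_reach hG n p q (hc p q hpq)
    · rw [SimpleGraph.connected_iff]
      refine ⟨fun i j => ?_, ⟨⟨0, hn⟩⟩⟩
      by_cases hij : i = j
      · subst hij; exact SimpleGraph.Reachable.refl i
      · have hne : i.castSucc ≠ j.castSucc := fun e => hij (Fin.castSucc_inj.mp e)
        rcases hc i.castSucc j.castSucc hne with h | h
        · exact sb_solid_reach hG n i j h
        · exfalso
          rcases (sb_good_closure hG n).2.2.2.2.2 _ _ h with h' | h'
          · exact (Fin.castSucc_lt_last i).ne h'
          · exact (Fin.castSucc_lt_last j).ne h'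
  · rintro ⟨hconn, hsconn⟩
    have hsolid : ∀ i j : Fin n, i ≠ j →
        (G.closure (n - 1)).solid i.castSucc j.castSucc := by
      intro i j hij
      obtain ⟨w⟩ := hsconn.preconnected i j
      have hlt : w.toPath.1.length < n := by
        simpa using (w.toPath.2.length_lt)
      exact sb_walk_solid hG (n - 1) i j w.toPath.1 (by omega) hij
    have hk : ∃ k : Fin n, G.broken k.castSucc (Fin.last n) := by
      have key : ∀ (x : Fin (n + 1)),
          (SimpleGraph.fromRel (fun p q => G.solid p q ∨ G.broken p q)).Walk (Fin.last n) x →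
          x ≠ Fin.last n → ∃ k : Fin n, G.broken k.castSucc (Fin.last n) := by
        intro x w hx
        cases w with
        | nil => exact absurd rfl hx
        | @cons _ v _ h w' =>
          rw [SimpleGraph.fromRel_adj] at h
          have hb : G.broken v (Fin.last n) := by
            rcases h.2 with (h' | h') | (h' | h')
            · exact absurd rfl (hG.2.2.1 _ _ h').1
            · exact hG.2.2.2.1 _ _ h'
            · exact absurd rfl (hG.2.2.1 _ _ h').2
            · exact h'
          have hv : v ≠ Fin.last n := hG.2.2.2.2.1 _ _ hb
          obtain ⟨k, rfl⟩ := Fin.exists_castSucc_eq.mpr hv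
          exact ⟨k, hb⟩
      obtain ⟨w⟩ := hconn.preconnected (Fin.last n) ((⟨0, hn⟩ : Fin n).castSucc)
      exact key _ w ((Fin.castSucc_lt_last _).ne)
    have hbroken : ∀ i : Fin n, (G.closure n).broken i.castSucc (Fin.last n) := by
      obtain ⟨k, hk⟩ := hk
      intro i
      by_cases hik : i = k
      · subst hik; exact sb_closure_broken_mono G (Nat.zero_le n) hk
      · have hs := hsolid i k hik
        have hb : (G.closure (n - 1)).broken k.castSucc (Fin.last n) :=
          sb_closure_broken_mono G (Nat.zero_le _) hk
        have hcl : G.closure n = (G.closure (n - 1)).step := by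
          have e : (n - 1) + 1 = n := by omega
          rw [← sb_closure_succ, e]
        rw [hcl]
        exact Or.inr ⟨k.castSucc, fun e => hik (Fin.castSucc_inj.mp e),
          (Fin.castSucc_lt_last k).ne, (Fin.castSucc_lt_last i).ne, Or.inl ⟨hs, hb⟩⟩
    intro p q hpq
    by_cases hp : p = Fin.last n
    · subst hp
      have hq : q ≠ Fin.last n := fun e => hpq e.symm
      obtain ⟨j, rfl⟩ := Fin.exists_castSucc_eq.mpr hq
      exact Or.inr ((sb_good_closure hG n).2.2.2.1 _ _ (hbroken j))
    · obtain ⟨i, rfl⟩ := Fin.exists_castSucc_eq.mpr hp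
      by_cases hq : q = Fin.last n
      · subst hq; exact Or.inr (hbroken i)
      · obtain ⟨j, rfl⟩ := Fin.exists_castSucc_eq.mpr hq
        have hij : i ≠ j := fun e => hpq (by rw [e])
        exact Or.inl (sb_closure_solid_mono G (by omega) (hsolid i j hij))
end

section
/- An index set Λ̂ minimizes the cardinality |Λ| among all index sets Λ whose pattern subspace B_Λ generates se(n) as a Lie algebra, and B_{Λ̂} itself generates se(n) as a Lie algebra, if and only if the graph on vertex set {1,...,n+1} with edge set {{i,j} : (i,j) ∈ Λ̂} is a spanning tree of {1,...,n+1} whose restriction to the vertices {1,...,n} (i.e., the graph on {1,...,n} with edge set {{i,j} : (i,j) ∈ Λ̂, j ≤ n}) is a spanning tree of {1,...,n}. -/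
open Matrix

attribute [local instance 100] LieRing.ofAssociativeRing

section Aux
variable {n : ℕ}

lemma castSucc_ne_last (m : Fin n) : m.castSucc ≠ Fin.last n := (Fin.castSucc_lt_last m).ne

lemma omega_apply (i j : Fin n) (p q : Fin (n+1)) :
    Omega i j p q = (if i.castSucc = p ∧ j.castSucc = q then (1:ℝ) else 0)
      - (if j.castSucc = p ∧ i.castSucc = q then 1 else 0) := rfl

lemma ecol_apply (k : Fin n) (p q : Fin (n+1)) :
    Ecol k p q = (if k.castSucc = p ∧ Fin.last n = q then (1:ℝ) else 0) := rfl

lemma omega_mem_seSet (i j : Fin n) : Omega i j ∈ seSet n := by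
  constructor
  · intro q
    simp [omega_apply, castSucc_ne_last i, castSucc_ne_last j]
  · intro a b
    simp only [omega_apply, Fin.castSucc_inj]
    have e1 : (i = b ∧ j = a) ↔ (j = a ∧ i = b) := and_comm
    have e2 : (j = b ∧ i = a) ↔ (i = a ∧ j = b) := and_comm
    rw [if_congr e1 rfl rfl, if_congr e2 rfl rfl]
    ring

lemma ecol_mem_seSet (k : Fin n) : Ecol k ∈ seSet n := by
  constructor
  · intro q
    simp [ecol_apply, castSucc_ne_last k]
  · intro a b
    simp [ecol_apply, (castSucc_ne_last b).symm, (castSucc_ne_last a).symm]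

lemma bracket_last_row {A B : Mat n} (hA : A ∈ seSet n) (hB : B ∈ seSet n) (q : Fin (n+1)) :
    ⁅A, B⁆ (Fin.last n) q = 0 := by
  simp only [Ring.lie_def, Matrix.sub_apply, Matrix.mul_apply]
  rw [Finset.sum_eq_zero (fun k _ => by rw [hA.1 k, zero_mul]),
      Finset.sum_eq_zero (fun k _ => by rw [hB.1 k, zero_mul])]
  ring

lemma bracket_block {A B : Mat n} (hA : A ∈ seSet n) (hB : B ∈ seSet n) (p q : Fin n) :
    ⁅A, B⁆ p.castSucc q.castSucc =
      ∑ k : Fin n, (A p.castSucc k.castSucc * B k.castSucc q.castSucc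
        - B p.castSucc k.castSucc * A k.castSucc q.castSucc) := by
  simp only [Ring.lie_def, Matrix.sub_apply, Matrix.mul_apply]
  rw [Fin.sum_univ_castSucc (f := fun k => A p.castSucc k * B k q.castSucc),
      Fin.sum_univ_castSucc (f := fun k => B p.castSucc k * A k q.castSucc),
      hB.1 q.castSucc, hA.1 q.castSucc, mul_zero, mul_zero, add_zero, add_zero,
      Finset.sum_sub_distrib]

lemma bracket_mem_seSet {A B : Mat n} (hA : A ∈ seSet n) (hB : B ∈ seSet n) :
    ⁅A, B⁆ ∈ seSet n := by
  refine ⟨bracket_last_row hA hB, fun i j => ?_⟩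
  rw [bracket_block hA hB, bracket_block hA hB, ← Finset.sum_neg_distrib]
  refine Finset.sum_congr rfl fun k _ => ?_
  rw [hA.2 i k, hB.2 k j, hB.2 i k, hA.2 k j]
  ring

/-- se(n) as a Lie subalgebra. -/
def seLie (n : ℕ) : LieSubalgebra ℝ (Mat n) :=
  { seL n with lie_mem' := fun hA hB => bracket_mem_seSet hA hB }

lemma mem_seLie_iff (M : Mat n) : M ∈ seLie n ↔ M ∈ seSet n := Iff.rfl

end Aux
section Decomp
variable {n : ℕ}

lemma se_decomp {M : Mat n} (hM : M ∈ seSet n) :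
    M = (∑ i : Fin n, ∑ j : Fin n, ((1/2 : ℝ) * M i.castSucc j.castSucc) • Omega i j)
      + ∑ k : Fin n, (M k.castSucc (Fin.last n)) • Ecol k := by
  ext p q
  simp only [Matrix.add_apply, Matrix.sum_apply, Matrix.smul_apply, omega_apply, ecol_apply,
    smul_eq_mul, mul_sub, mul_ite, mul_one, mul_zero]
  induction p using Fin.lastCases with
  | last =>
    rw [hM.1 q]
    rw [Finset.sum_eq_zero, Finset.sum_eq_zero]
    · simp
    · intro k _
      simp [castSucc_ne_last k]
    · intro i _
      rw [Finset.sum_eq_zero]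
      intro j _
      simp [castSucc_ne_last i, castSucc_ne_last j]
  | cast p =>
    induction q using Fin.lastCases with
    | last =>
      rw [Finset.sum_eq_zero (fun i _ => ?_)]
      · simp only [zero_add]
        rw [Finset.sum_congr rfl (g := fun k => if k = p then M p.castSucc (Fin.last n) else 0)
            (fun k _ => ?_), Finset.sum_ite_eq' Finset.univ p _]
        · simp
        · by_cases h : k = p <;> simp [h, Fin.castSucc_inj]
      · rw [Finset.sum_eq_zero]
        intro j _
        simp [castSucc_ne_last j, castSucc_ne_last i]
    | cast q =>
      simp only [Fin.castSucc_inj]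
      have h0 : (∑ k : Fin n, if k = p ∧ Fin.last n = q.castSucc
            then M k.castSucc (Fin.last n) else 0) = 0 :=
        Finset.sum_eq_zero (fun k _ => by simp [(castSucc_ne_last q).symm])
      rw [h0, add_zero]
      rw [Finset.sum_congr rfl
          (g := fun i => (if i = p then (1/2) * M p.castSucc q.castSucc else 0)
            - (if i = q then (1/2) * M q.castSucc p.castSucc else 0)) (fun i _ => ?_)]
      · rw [Finset.sum_sub_distrib, Finset.sum_ite_eq' Finset.univ p _,
          Finset.sum_ite_eq' Finset.univ q _]
        simp only [Finset.mem_univ, if_true]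
        rw [hM.2 q p]
        ring
      · rw [Finset.sum_sub_distrib]
        congr 1
        · by_cases h : i = p
          · subst h
            simp only [true_and, if_pos rfl]
            rw [Finset.sum_congr rfl (g := fun j => if j = q then (1/2) * M i.castSucc j.castSucc
                else 0) (fun j _ => by simp), Finset.sum_ite_eq' Finset.univ q _]
            simp
          · rw [Finset.sum_eq_zero (fun j _ => by simp [h])]
            simp [h]
        · by_cases h : i = q
          · subst h
            simp only [and_true, if_pos rfl]
            rw [Finset.sum_congr rfl (g := fun j => if j = p then (1/2) * M i.castSucc j.castSucc
                else 0) (fun j _ => by simp), Finset.sum_ite_eq' Finset.univ p _]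
            simp
          · rw [Finset.sum_eq_zero (fun j _ => by simp [h])]
            simp [h]

end Decomp
section Gen
variable {n : ℕ}

/-- The solid graph of an index set on `Fin n`. -/
abbrev solidG (Λ : Set (Fin (n + 1) × Fin (n + 1))) : SimpleGraph (Fin n) :=
  SimpleGraph.fromRel (fun i j : Fin n => (i.castSucc, j.castSucc) ∈ Λ)

lemma omega_neg (i j : Fin n) : Omega j i = - Omega i j := by
  simp [Omega]

lemma omega_bracket {i j k : Fin n} (hij : i ≠ j) (hjk : j ≠ k) (hik : i ≠ k) :
    ⁅Omega i j, Omega j k⁆ = Omega i k := by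
  have h1 : i.castSucc ≠ j.castSucc := by simpa using hij
  have h2 : j.castSucc ≠ k.castSucc := by simpa using hjk
  have h3 : i.castSucc ≠ k.castSucc := by simpa using hik
  simp only [Ring.lie_def, Omega, sub_mul, mul_sub,
    Matrix.single_mul_single_same, Matrix.single_mul_single_of_ne,
    h1, h2, h3, h1.symm, h2.symm, h3.symm, ne_eq, not_false_iff, mul_one]
  abel

lemma omega_ecol_bracket {i j : Fin n} (hij : i ≠ j) : ⁅Omega i j, Ecol j⁆ = Ecol i := by
  have h1 : i.castSucc ≠ j.castSucc := by simpa using hij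
  have hl : ∀ m : Fin n, (Fin.last n) ≠ m.castSucc := fun m => (castSucc_ne_last m).symm
  simp only [Ring.lie_def, Omega, Ecol, sub_mul, mul_sub,
    Matrix.single_mul_single_same, Matrix.single_mul_single_of_ne,
    h1, h1.symm, hl i, hl j, ne_eq, not_false_iff, mul_one]
  abel

lemma genSet_subset_seSet (Λ : Set (Fin (n + 1) × Fin (n + 1))) : genSet Λ ⊆ seSet n := by
  rintro M (⟨i, j, _, rfl⟩ | ⟨k, _, rfl⟩)
  · exact omega_mem_seSet i j
  · exact ecol_mem_seSet k

/-- Backward: connected solid graph plus a broken edge implies generation. -/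
lemma generates_of (Λ : Set (Fin (n + 1) × Fin (n + 1)))
    (hconn : (solidG Λ).Connected) (k0 : Fin n) (hk0 : (k0.castSucc, Fin.last n) ∈ Λ) :
    GeneratesSE n Λ := by
  set L := LieSubalgebra.lieSpan ℝ (Mat n) (BLam Λ : Set (Mat n)) with hL
  have hgen : ∀ M ∈ genSet Λ, M ∈ L :=
    fun M hM => LieSubalgebra.subset_lieSpan (Submodule.subset_span hM)
  -- adjacency gives Omega in L
  have hadj : ∀ i j : Fin n, (solidG Λ).Adj i j → Omega i j ∈ L := by
    intro i j hij
    rw [SimpleGraph.fromRel_adj] at hij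
    rcases hij with ⟨hne, h | h⟩
    · exact hgen _ (Or.inl ⟨i, j, h, rfl⟩)
    · have : Omega j i ∈ L := hgen _ (Or.inl ⟨j, i, h, rfl⟩)
      rw [omega_neg] at this
      simpa using neg_mem this
  have homega : ∀ i j : Fin n, i ≠ j → Omega i j ∈ L := by
    have key : ∀ (a b : Fin n) (w : (solidG Λ).Walk a b), a ≠ b → Omega a b ∈ L := by
      intro a b w
      induction w with
      | nil => exact fun hne => absurd rfl hne
      | @cons u v x h q ih =>
        intro hne
        by_cases hbc : v = x
        · subst hbc
          exact hadj _ _ h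
        · have h1 : Omega u v ∈ L := hadj u v h
          have h2 : Omega v x ∈ L := ih hbc
          have := LieSubalgebra.lie_mem L h1 h2
          rwa [omega_bracket h.ne hbc hne] at this
    intro i j hne
    obtain ⟨w⟩ := hconn i j
    exact key i j w hne
  have hecol : ∀ k : Fin n, Ecol k ∈ L := by
    intro k
    have h0 : Ecol k0 ∈ L := hgen _ (Or.inr ⟨k0, hk0, rfl⟩)
    by_cases hk : k = k0
    · subst hk; exact h0
    · have h1 : Omega k k0 ∈ L := homega k k0 hk
      have := LieSubalgebra.lie_mem L h1 h0
      rwa [omega_ecol_bracket hk] at this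
  apply Set.Subset.antisymm
  · have : L ≤ seLie n := by
      rw [hL, LieSubalgebra.lieSpan_le]
      intro M hM
      exact Submodule.span_le.mpr (genSet_subset_seSet Λ) hM
    exact this
  · intro M hM
    rw [se_decomp hM]
    refine add_mem (sum_mem fun i _ => sum_mem fun j _ => ?_)
      (sum_mem fun k _ => L.smul_mem _ (hecol k))
    by_cases hij : i = j
    · subst hij
      have : Omega i i = 0 := by simp [Omega]
      rw [this, smul_zero]
      exact zero_mem _
    · exact Submodule.smul_mem _ _ (homega i j hij)

end Gen
section Forward
variable {n : ℕ}

/-- Matrices with zero last row and zero last column: an invariant subalgebra. -/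
def W0 (n : ℕ) : LieSubalgebra ℝ (Mat n) where
  carrier := {M | (∀ j, M (Fin.last n) j = 0) ∧ ∀ i, M i (Fin.last n) = 0}
  add_mem' := by
    rintro a b ⟨ha1, ha2⟩ ⟨hb1, hb2⟩
    exact ⟨fun j => by simp [Matrix.add_apply, ha1 j, hb1 j],
      fun i => by simp [Matrix.add_apply, ha2 i, hb2 i]⟩
  zero_mem' := ⟨fun j => rfl, fun i => rfl⟩
  smul_mem' := by
    rintro c a ⟨ha1, ha2⟩
    exact ⟨fun j => by simp [Matrix.smul_apply, ha1 j],
      fun i => by simp [Matrix.smul_apply, ha2 i]⟩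
  lie_mem' := by
    rintro A B ⟨hA1, hA2⟩ ⟨hB1, hB2⟩
    constructor
    · intro j
      simp only [Ring.lie_def, Matrix.sub_apply, Matrix.mul_apply]
      rw [Finset.sum_eq_zero (fun k _ => by rw [hA1 k, zero_mul]),
        Finset.sum_eq_zero (fun k _ => by rw [hB1 k, zero_mul])]
      ring
    · intro i
      simp only [Ring.lie_def, Matrix.sub_apply, Matrix.mul_apply]
      rw [Finset.sum_eq_zero (fun k _ => by rw [hB2 k, mul_zero]),
        Finset.sum_eq_zero (fun k _ => by rw [hA2 k, mul_zero])]
      ring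

/-- The cut subalgebra associated with a set of solid vertices closed under adjacency. -/
def Wcut (n : ℕ) (S : Set (Fin n)) : LieSubalgebra ℝ (Mat n) where
  carrier := {M | M ∈ seSet n ∧ ∀ i ∈ S, ∀ j ∉ S, M i.castSucc j.castSucc = 0}
  add_mem' := by
    rintro a b ⟨ha, ha2⟩ ⟨hb, hb2⟩
    exact ⟨(seL n).add_mem ha hb,
      fun i hi j hj => by simp [Matrix.add_apply, ha2 i hi j hj, hb2 i hi j hj]⟩
  zero_mem' := ⟨(seL n).zero_mem, fun i _ j _ => rfl⟩
  smul_mem' := by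
    rintro c a ⟨ha, ha2⟩
    exact ⟨(seL n).smul_mem c ha, fun i hi j hj => by simp [Matrix.smul_apply, ha2 i hi j hj]⟩
  lie_mem' := by
    rintro A B ⟨hA, hA2⟩ ⟨hB, hB2⟩
    refine ⟨bracket_mem_seSet hA hB, fun i hi j hj => ?_⟩
    rw [bracket_block hA hB]
    refine Finset.sum_eq_zero (fun k _ => ?_)
    by_cases hk : k ∈ S
    · rw [hB2 k hk j hj, hA2 k hk j hj, mul_zero, mul_zero, sub_zero]
    · rw [hA2 i hi k hk, hB2 i hi k hk, zero_mul, zero_mul, sub_zero]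

lemma omega_ne_of {i j : Fin n} (hij : i ≠ j) : Omega i j i.castSucc j.castSucc = 1 := by
  simp [omega_apply, Fin.castSucc_inj, Ne.symm hij]

lemma ecol_ne (k : Fin n) : Ecol k k.castSucc (Fin.last n) = 1 := by simp [ecol_apply]

/-- Forward: generation implies a broken edge exists. -/
lemma broken_of_generates (hn : 1 ≤ n) (Λ : Set (Fin (n + 1) × Fin (n + 1)))
    (hgen : GeneratesSE n Λ) : ∃ k : Fin n, (k.castSucc, Fin.last n) ∈ Λ := by
  by_contra hbr
  push_neg at hbr
  have hsub : genSet Λ ⊆ (W0 n : Set (Mat n)) := by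
    rintro M (⟨i, j, _, rfl⟩ | ⟨k, hk, rfl⟩)
    · constructor
      · intro q
        simp [omega_apply, castSucc_ne_last i, castSucc_ne_last j]
      · intro q
        simp [omega_apply, castSucc_ne_last i, castSucc_ne_last j]
    · exact absurd hk (hbr k)
  have hle : LieSubalgebra.lieSpan ℝ (Mat n) (BLam Λ : Set (Mat n)) ≤ W0 n := by
    rw [LieSubalgebra.lieSpan_le]
    exact fun M hM => Submodule.span_le.mpr hsub hM
  set k : Fin n := ⟨0, hn⟩
  have hEse : Ecol k ∈ seSet n := ecol_mem_seSet k
  rw [← hgen] at hEse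
  have := (hle hEse).2 k.castSucc
  rw [ecol_ne k] at this
  exact one_ne_zero this

/-- Forward: generation implies the solid graph is connected. -/
lemma connected_of_generates (hn : 1 ≤ n) (Λ : Set (Fin (n + 1) × Fin (n + 1)))
    (hgen : GeneratesSE n Λ) : (solidG Λ).Connected := by
  have hne : Nonempty (Fin n) := ⟨⟨0, hn⟩⟩
  rw [SimpleGraph.connected_iff]
  refine ⟨fun i0 j0 => ?_, hne⟩
  by_contra hreach
  set S : Set (Fin n) := {j | (solidG Λ).Reachable i0 j} with hS
  have hi0 : i0 ∈ S := SimpleGraph.Reachable.refl i0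
  have hj0 : j0 ∉ S := hreach
  have hsub : genSet Λ ⊆ (Wcut n S : Set (Mat n)) := by
    rintro M (⟨i, j, hij, rfl⟩ | ⟨k, hk, rfl⟩)
    · refine ⟨omega_mem_seSet i j, fun a ha b hb => ?_⟩
      by_cases hij' : i = j
      · subst hij'
        have h0 : Omega i i = 0 := by simp [Omega]
        simp [h0]
      · have hadj : (solidG Λ).Adj i j := by
          rw [SimpleGraph.fromRel_adj]
          exact ⟨hij', Or.inl hij⟩
        have hSiff : (i ∈ S ↔ j ∈ S) :=
          ⟨fun h => h.trans hadj.reachable, fun h => h.trans hadj.symm.reachable⟩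
        simp only [omega_apply]
        rw [if_neg, if_neg, sub_zero]
        · rintro ⟨h1, h2⟩
          rw [Fin.castSucc_inj] at h1 h2
          subst h1; subst h2
          exact hb (hSiff.mpr ha)
        · rintro ⟨h1, h2⟩
          rw [Fin.castSucc_inj] at h1 h2
          subst h1; subst h2
          exact hb (hSiff.mp ha)
    · refine ⟨ecol_mem_seSet k, fun a ha b hb => ?_⟩
      simp [ecol_apply, (castSucc_ne_last b).symm]
  have hle : LieSubalgebra.lieSpan ℝ (Mat n) (BLam Λ : Set (Mat n)) ≤ Wcut n S := by
    rw [LieSubalgebra.lieSpan_le]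
    exact fun M hM => Submodule.span_le.mpr hsub hM
  have hij0 : i0 ≠ j0 := fun h => hj0 (h ▸ hi0)
  have hOse : Omega i0 j0 ∈ seSet n := omega_mem_seSet i0 j0
  rw [← hgen] at hOse
  have := (hle hOse).2 i0 hi0 j0 hj0
  rw [omega_ne_of hij0] at this
  exact one_ne_zero this

/-- Main Lie-algebraic characterization of generation. -/
lemma generates_iff (hn : 1 ≤ n) (Λ : Set (Fin (n + 1) × Fin (n + 1))) :
    GeneratesSE n Λ ↔
      (solidG Λ).Connected ∧ ∃ k : Fin n, (k.castSucc, Fin.last n) ∈ Λ := by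
  constructor
  · intro h
    exact ⟨connected_of_generates hn Λ h, broken_of_generates hn Λ h⟩
  · rintro ⟨hc, k0, hk0⟩
    exact generates_of Λ hc k0 hk0

end Forward
section GGraph
open SimpleGraph
variable {V : Type*} [Fintype V]

omit [Fintype V] in
/-- Every vertex other than a fixed root of a connected graph has a neighbour strictly
closer to the root. -/
lemma exists_closer {G : SimpleGraph V} (hG : G.Connected) (r v : V) (hv : v ≠ r) :
    ∃ w, G.Adj v w ∧ G.dist w r < G.dist v r := by
  obtain ⟨p, hp⟩ := (hG v r).exists_walk_length_eq_dist
  cases p with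
  | nil => exact absurd rfl hv
  | cons h q =>
    refine ⟨_, h, ?_⟩
    have h1 : G.dist _ r ≤ q.length := SimpleGraph.dist_le q
    rw [SimpleGraph.Walk.length_cons] at hp
    omega

/-- A connected graph on a finite vertex set has at least `card V - 1` edges. -/
lemma card_le_ncard_edges {G : SimpleGraph V} (hG : G.Connected) :
    Fintype.card V ≤ G.edgeSet.ncard + 1 := by
  classical
  obtain ⟨r⟩ := hG.nonempty
  set T : Set V := Set.univ \ {r} with hT
  have hTcard : T.ncard + 1 = Fintype.card V := by
    rw [hT, Set.ncard_diff_singleton_add_one (Set.mem_univ r) Set.finite_univ, Set.ncard_univ, Nat.card_eq_fintype_card]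
  set F : V → Sym2 V := fun v =>
    if h : v ≠ r then s(v, (exists_closer hG r v h).choose) else s(r, r) with hF
  have himg : F '' T ⊆ G.edgeSet := by
    rintro e ⟨v, hv, rfl⟩
    have hv' : v ≠ r := fun h => hv.2 h
    rw [hF]
    simp only [dif_pos hv']
    exact (exists_closer hG r v hv').choose_spec.1
  have hinj : Set.InjOn F T := by
    rintro u hu v hv he
    have hu' : u ≠ r := fun h => hu.2 h
    have hv' : v ≠ r := fun h => hv.2 h
    rw [hF] at he
    simp only [dif_pos hu', dif_pos hv', Sym2.eq_iff] at he
    rcases he with ⟨h1, _⟩ | ⟨h1, h2⟩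
    · exact h1
    · exfalso
      have du := (exists_closer hG r u hu').choose_spec.2
      have dv := (exists_closer hG r v hv').choose_spec.2
      rw [h2] at du
      rw [← h1] at dv
      omega
  have := Set.ncard_le_ncard himg (G.edgeSet.toFinite)
  rw [Set.ncard_image_of_injOn hinj] at this
  omega

/-- A connected graph with `card V - 1` edges is acyclic. -/
lemma acyclic_of_card {G : SimpleGraph V} (hG : G.Connected)
    (hcard : G.edgeSet.ncard + 1 = Fintype.card V) : G.IsAcyclic := by
  classical
  intro v c hc
  cases c with
  | nil => exact hc.not_nil SimpleGraph.Walk.nil_nil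
  | cons h q =>
    rename_i b
    have hmem : s(v, b) ∈ (SimpleGraph.Walk.cons h q).edges := by
      simp [SimpleGraph.Walk.edges_cons]
    obtain ⟨hadj, hreach⟩ :=
      (SimpleGraph.adj_and_reachable_delete_edges_iff_exists_cycle).mpr ⟨v, _, hc, hmem⟩
    set G' := G \ SimpleGraph.fromEdgeSet {s(v, b)} with hG'
    have hle : ∀ x y, G'.Adj x y → G.Adj x y := fun x y hxy => (SimpleGraph.sdiff_adj _ _ x y |>.mp hxy).1
    have hpre : ∀ x y (p : G.Walk x y), G'.Reachable x y := by
      intro x y p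
      induction p with
      | nil => exact SimpleGraph.Reachable.refl _
      | cons ha q ih =>
        rename_i xx zz yy
        refine SimpleGraph.Reachable.trans ?_ ih
        by_cases he : s(xx, zz) = s(v, b)
        · rw [Sym2.eq_iff] at he
          rcases he with ⟨rfl, rfl⟩ | ⟨rfl, rfl⟩
          · exact hreach
          · exact hreach.symm
        · refine SimpleGraph.Adj.reachable ?_
          rw [hG', SimpleGraph.sdiff_adj]
          refine ⟨ha, fun hcon => ?_⟩
          rw [SimpleGraph.fromEdgeSet_adj] at hcon
          exact he hcon.1
    have hconn' : G'.Connected := by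
      rw [SimpleGraph.connected_iff]
      exact ⟨fun x y => hpre x y (hG x y).some, hG.nonempty⟩
    have hedge : G'.edgeSet = G.edgeSet \ {s(v, b)} := by
      rw [hG', SimpleGraph.edgeSet_sdiff, SimpleGraph.edgeSet_fromEdgeSet]
      congr 1
      ext e
      simp only [Set.mem_diff, Set.mem_singleton_iff, Set.mem_setOf_eq, and_iff_left_iff_imp]
      rintro rfl
      simp [Sym2.mk_isDiag_iff, h.ne]
    have hmem' : s(v, b) ∈ G.edgeSet := hadj
    have hcount : G'.edgeSet.ncard + 1 = G.edgeSet.ncard := by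
      rw [hedge]
      exact Set.ncard_diff_singleton_add_one hmem' (G.edgeSet.toFinite)
    have := card_le_ncard_edges hconn'
    omega

/-- A tree has exactly `card V - 1` edges. -/
lemma tree_card {G : SimpleGraph V} (hG : G.Connected) (ha : G.IsAcyclic) :
    G.edgeSet.ncard + 1 = Fintype.card V := by
  classical
  letI : Fintype G.edgeSet := G.edgeSet.toFinite.fintype
  have := SimpleGraph.IsTree.card_edgeFinset ⟨hG, ha⟩
  rw [← SimpleGraph.coe_edgeFinset, Set.ncard_coe_finset]; exact this

end GGraph
section Count
variable {n : ℕ}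

/-- Edge set of the graph of an ordered relation. -/
lemma edgeSet_fromRel_ordered {α : Type*} [LinearOrder α] (Λ : Set (α × α))
    (h : ∀ e ∈ Λ, e.1 < e.2) :
    (SimpleGraph.fromRel (fun p q => (p, q) ∈ Λ)).edgeSet
      = (fun e : α × α => s(e.1, e.2)) '' Λ := by
  ext e
  induction e using Sym2.ind with
  | _ x y =>
    rw [SimpleGraph.mem_edgeSet, SimpleGraph.fromRel_adj]
    constructor
    · rintro ⟨hne, hxy | hyx⟩
      · exact ⟨(x, y), hxy, rfl⟩
      · exact ⟨(y, x), hyx, Sym2.eq_swap⟩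
    · rintro ⟨⟨a, b⟩, hab, he⟩
      have hlt := h _ hab
      rw [Sym2.eq_iff] at he
      rcases he with ⟨rfl, rfl⟩ | ⟨rfl, rfl⟩
      · exact ⟨hlt.ne, Or.inl hab⟩
      · exact ⟨hlt.ne', Or.inr hab⟩

lemma ncard_edgeSet_fromRel_ordered {α : Type*} [LinearOrder α] (Λ : Set (α × α))
    (h : ∀ e ∈ Λ, e.1 < e.2) :
    (SimpleGraph.fromRel (fun p q => (p, q) ∈ Λ)).edgeSet.ncard = Λ.ncard := by
  rw [edgeSet_fromRel_ordered Λ h]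
  apply Set.ncard_image_of_injOn
  rintro ⟨a, b⟩ ha ⟨c, d⟩ hc he
  simp only [Sym2.eq_iff] at he
  rcases he with ⟨rfl, rfl⟩ | ⟨rfl, rfl⟩
  · rfl
  · exact absurd ((h _ ha).trans (h _ hc)) (lt_irrefl _)

/-- The solid part of an index set, as a set of pairs over `Fin n`. -/
def solidPairs (Λ : Set (Fin (n + 1) × Fin (n + 1))) : Set (Fin n × Fin n) :=
  {e | (e.1.castSucc, e.2.castSucc) ∈ Λ}

/-- The broken part of an index set. -/
def brokenPairs (Λ : Set (Fin (n + 1) × Fin (n + 1))) : Set (Fin (n + 1) × Fin (n + 1)) :=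
  {e ∈ Λ | e.2 = Fin.last n}

lemma solidPairs_lt (Λ : Set (Fin (n + 1) × Fin (n + 1))) (hΛ : IndexSet Λ) :
    ∀ e ∈ solidPairs Λ, e.1 < e.2 := by
  rintro ⟨a, b⟩ hab
  have := hΛ _ hab
  simpa [Fin.castSucc_lt_castSucc_iff] using this

lemma ncard_split (Λ : Set (Fin (n + 1) × Fin (n + 1))) (hΛ : IndexSet Λ) :
    Λ.ncard = (solidPairs Λ).ncard + (brokenPairs Λ).ncard := by
  have hun : Λ = (fun e : Fin n × Fin n => (e.1.castSucc, e.2.castSucc)) '' solidPairs Λ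
      ∪ brokenPairs Λ := by
    ext ⟨a, b⟩
    constructor
    · intro hab
      by_cases hb : b = Fin.last n
      · exact Or.inr ⟨hab, hb⟩
      · have ha : a ≠ Fin.last n := by
          intro h
          have := hΛ _ hab
          rw [h] at this
          exact absurd (Fin.le_last b) (not_le_of_gt this)
        refine Or.inl ⟨(a.castPred ha, b.castPred hb), ?_, ?_⟩
        · simpa [solidPairs, Fin.castSucc_castPred] using hab
        · simp [Fin.castSucc_castPred]
    · rintro (⟨⟨i, j⟩, hij, he⟩ | ⟨h, -⟩)
      · rw [← he]
        exact hij
      · exact h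
    -- 
  have hdisj : Disjoint ((fun e : Fin n × Fin n => (e.1.castSucc, e.2.castSucc)) '' solidPairs Λ)
      (brokenPairs Λ) := by
    rw [Set.disjoint_left]
    rintro ⟨a, b⟩ ⟨⟨i, j⟩, hij, he⟩ ⟨-, hb⟩
    rw [Prod.ext_iff] at he
    exact castSucc_ne_last j (he.2.trans hb)
  have hinj : Set.InjOn (fun e : Fin n × Fin n => (e.1.castSucc, e.2.castSucc)) (solidPairs Λ) := by
    rintro ⟨a, b⟩ _ ⟨c, d⟩ _ he
    simp only [Prod.mk.injEq, Fin.castSucc_inj] at he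
    exact Prod.ext he.1 he.2
  conv_lhs => rw [hun]
  rw [Set.ncard_union_eq hdisj (Set.toFinite _) (Set.toFinite _), Set.ncard_image_of_injOn hinj]

lemma broken_nonempty_iff (Λ : Set (Fin (n + 1) × Fin (n + 1))) (hΛ : IndexSet Λ) :
    (brokenPairs Λ).Nonempty ↔ ∃ k : Fin n, (k.castSucc, Fin.last n) ∈ Λ := by
  constructor
  · rintro ⟨⟨a, b⟩, ha, hb⟩
    replace hb : b = Fin.last n := hb
    subst hb
    replace ha : (a, Fin.last n) ∈ Λ := ha
    have hlt : a < Fin.last n := hΛ _ ha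
    have ha' : a ≠ Fin.last n := hlt.ne
    exact ⟨a.castPred ha', by rwa [Fin.castSucc_castPred]⟩
  · rintro ⟨k, hk⟩
    exact ⟨(k.castSucc, Fin.last n), hk, rfl⟩

/-- Any generating index set has at least n elements. -/
lemma ncard_ge_of_generates (hn : 1 ≤ n) (Λ : Set (Fin (n + 1) × Fin (n + 1)))
    (hΛ : IndexSet Λ) (hgen : GeneratesSE n Λ) : n ≤ Λ.ncard := by
  obtain ⟨hconn, hbr⟩ := (generates_iff hn Λ).mp hgen
  have h1 : n ≤ (solidG Λ).edgeSet.ncard + 1 := by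
    have := card_le_ncard_edges hconn
    simpa using this
  have h2 : (solidG Λ).edgeSet.ncard = (solidPairs Λ).ncard :=
    ncard_edgeSet_fromRel_ordered (solidPairs Λ) (solidPairs_lt Λ hΛ)
  have h3 : 1 ≤ (brokenPairs Λ).ncard := by
    rw [Nat.one_le_iff_ne_zero, ← Nat.pos_iff_ne_zero, Set.ncard_pos (Set.toFinite _)]
    exact (broken_nonempty_iff Λ hΛ).mpr hbr
  have h4 := ncard_split Λ hΛ
  omega

/-- The star index set: all pairs (0, q) with q ≠ 0. -/
def starSet (n : ℕ) : Set (Fin (n + 1) × Fin (n + 1)) := {e | e.1 = 0 ∧ e.2 ≠ 0}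

lemma starSet_indexSet : IndexSet (starSet n) := by
  rintro ⟨a, b⟩ ⟨ha, hb⟩
  subst ha
  exact Fin.pos_iff_ne_zero.mpr hb

lemma starSet_ncard : (starSet n).ncard = n := by
  have himg : starSet n = (fun q : Fin (n + 1) => ((0 : Fin (n + 1)), q)) '' (Set.univ \ {0}) := by
    ext ⟨a, b⟩
    constructor
    · rintro ⟨ha, hb⟩
      refine ⟨b, ⟨Set.mem_univ b, hb⟩, ?_⟩
      rw [Prod.ext_iff]
      exact ⟨ha.symm, rfl⟩
    · rintro ⟨q, ⟨-, hq⟩, heq⟩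
      rw [Prod.ext_iff] at heq
      exact ⟨heq.1.symm, heq.2 ▸ hq⟩
  rw [himg, Set.ncard_image_of_injOn (fun a _ b _ h => by simpa using h)]
  have h := Set.ncard_diff_singleton_add_one (Set.mem_univ (0 : Fin (n + 1))) Set.finite_univ
  rw [Set.ncard_univ, Nat.card_eq_fintype_card, Fintype.card_fin] at h
  omega

lemma starSet_generates (hn : 1 ≤ n) : GeneratesSE n (starSet n) := by
  rw [generates_iff hn]
  constructor
  · rw [SimpleGraph.connected_iff]
    refine ⟨fun x y => ?_, ⟨⟨0, hn⟩⟩⟩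
    have hreach : ∀ z : Fin n, (solidG (starSet n)).Reachable ⟨0, hn⟩ z := by
      intro z
      by_cases hz : z = ⟨0, hn⟩
      · rw [hz]
      · refine SimpleGraph.Adj.reachable ?_
        rw [SimpleGraph.fromRel_adj]
        refine ⟨Ne.symm hz, Or.inl ⟨?_, ?_⟩⟩
        · simp [Fin.ext_iff]
        · simp only [ne_eq, Fin.ext_iff, Fin.val_zero, Fin.coe_castSucc]
          intro h
          exact hz (Fin.ext h)
    exact (hreach x).symm.trans (hreach y)
  · refine ⟨⟨0, hn⟩, ?_, ?_⟩
    · simp [Fin.ext_iff]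
    · simp only [ne_eq, Fin.ext_iff, Fin.val_zero, Fin.val_last]
      omega

end Count
section Assemble
variable {n : ℕ}

/-- The full graph on the n+1 vertices. -/
abbrev fullG (Λ : Set (Fin (n + 1) × Fin (n + 1))) : SimpleGraph (Fin (n + 1)) :=
  SimpleGraph.fromRel (fun p q : Fin (n + 1) => (p, q) ∈ Λ)

lemma full_connected (hn : 1 ≤ n) (Λ : Set (Fin (n + 1) × Fin (n + 1)))
    (hs : (solidG Λ).Connected) (hb : ∃ k : Fin n, (k.castSucc, Fin.last n) ∈ Λ) :
    (fullG Λ).Connected := by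
  have hmap : ∀ i j : Fin n, (solidG Λ).Adj i j → (fullG Λ).Adj i.castSucc j.castSucc := by
    intro i j h
    rw [SimpleGraph.fromRel_adj] at h ⊢
    exact ⟨by simpa using h.1, h.2⟩
  let f : solidG Λ →g fullG Λ := ⟨Fin.castSucc, fun {i j} h => hmap i j h⟩
  set z : Fin n := ⟨0, hn⟩
  have hbase : ∀ p : Fin (n + 1), (fullG Λ).Reachable p z.castSucc := by
    intro p
    induction p using Fin.lastCases with
    | last =>
      obtain ⟨k, hk⟩ := hb
      have hadj : (fullG Λ).Adj k.castSucc (Fin.last n) := by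
        rw [SimpleGraph.fromRel_adj]
        exact ⟨castSucc_ne_last k, Or.inl hk⟩
      exact hadj.symm.reachable.trans ((hs k z).map f)
    | cast i => exact (hs i z).map f
  rw [SimpleGraph.connected_iff]
  exact ⟨fun p q => (hbase p).trans (hbase q).symm, ⟨Fin.last n⟩⟩

lemma broken_of_full_connected (hn : 1 ≤ n) (Λ : Set (Fin (n + 1) × Fin (n + 1)))
    (hΛ : IndexSet Λ) (hc : (fullG Λ).Connected) :
    ∃ k : Fin n, (k.castSucc, Fin.last n) ∈ Λ := by
  set z : Fin n := ⟨0, hn⟩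
  have key : ∀ (q : Fin (n + 1)) (w : (fullG Λ).Walk (Fin.last n) q), Fin.last n ≠ q →
      ∃ k : Fin n, (k.castSucc, Fin.last n) ∈ Λ := by
    intro q w
    cases w with
    | nil => exact fun h => absurd rfl h
    | cons h q' =>
      rename_i b
      intro _
      rw [SimpleGraph.fromRel_adj] at h
      obtain ⟨hne, h1 | h2⟩ := h
      · have hlt : Fin.last n < b := hΛ _ h1
        exact absurd (Fin.le_last b) (not_le_of_gt hlt)
      · have hb : b ≠ Fin.last n := Ne.symm hne
        exact ⟨b.castPred hb, by rwa [Fin.castSucc_castPred]⟩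
  obtain ⟨w⟩ := hc.preconnected (Fin.last n) z.castSucc
  exact key _ w (castSucc_ne_last z).symm

end Assemble
/-- An index set Λ̂ minimizes |Λ| among index sets whose pattern
subspace generates se(n) as a Lie algebra (and itself generates se(n)) iff the graph on
{1,…,n+1} with edge set {{i,j} : (i,j) ∈ Λ̂} is a spanning tree of {1,…,n+1} whose
restriction to {1,…,n} is a spanning tree of {1,…,n}. -/
theorem stmt11 (n : ℕ) (hn : 1 ≤ n) (Λhat : Set (Fin (n + 1) × Fin (n + 1)))
    (hΛhat : IndexSet Λhat) :
    (GeneratesSE n Λhat ∧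
      ∀ Λ : Set (Fin (n + 1) × Fin (n + 1)), IndexSet Λ → GeneratesSE n Λ →
        Λhat.ncard ≤ Λ.ncard) ↔
    ((SimpleGraph.fromRel (fun p q : Fin (n + 1) => (p, q) ∈ Λhat)).Connected ∧
     (SimpleGraph.fromRel (fun p q : Fin (n + 1) => (p, q) ∈ Λhat)).IsAcyclic ∧
     (SimpleGraph.fromRel (fun i j : Fin n => (i.castSucc, j.castSucc) ∈ Λhat)).Connected ∧
     (SimpleGraph.fromRel (fun i j : Fin n => (i.castSucc, j.castSucc) ∈ Λhat)).IsAcyclic) := by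
  
  constructor
  · rintro ⟨hgen, hmin⟩
    obtain ⟨hconn, hbr⟩ := (generates_iff hn Λhat).mp hgen
    have hle : Λhat.ncard ≤ n := by
      have := hmin (starSet n) starSet_indexSet (starSet_generates hn)
      rwa [starSet_ncard] at this
    have h1 : n ≤ (solidG Λhat).edgeSet.ncard + 1 := by
      have := card_le_ncard_edges hconn
      simpa using this
    have h2 : (solidG Λhat).edgeSet.ncard = (solidPairs Λhat).ncard :=
      ncard_edgeSet_fromRel_ordered (solidPairs Λhat) (solidPairs_lt Λhat hΛhat)
    have h3 : 1 ≤ (brokenPairs Λhat).ncard := by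
      rw [Nat.one_le_iff_ne_zero, ← Nat.pos_iff_ne_zero, Set.ncard_pos (Set.toFinite _)]
      exact (broken_nonempty_iff Λhat hΛhat).mpr hbr
    have h4 := ncard_split Λhat hΛhat
    have h5 : (fullG Λhat).edgeSet.ncard = Λhat.ncard :=
      ncard_edgeSet_fromRel_ordered Λhat hΛhat
    have hΛn : Λhat.ncard = n := by omega
    refine ⟨full_connected hn Λhat hconn hbr, ?_, hconn, ?_⟩
    · refine acyclic_of_card (full_connected hn Λhat hconn hbr) ?_
      rw [h5, hΛn, Fintype.card_fin]
    · refine acyclic_of_card hconn ?_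
      rw [Fintype.card_fin]
      have hsp : (solidG Λhat).edgeSet.ncard + 1 = n := by omega
      exact hsp
  · rintro ⟨hFc, hFa, hSc, hSa⟩
    have hbr := broken_of_full_connected hn Λhat hΛhat hFc
    have hgen := (generates_iff hn Λhat).mpr ⟨hSc, hbr⟩
    have hcard : Λhat.ncard = n := by
      have := tree_card hFc hFa
      rw [ncard_edgeSet_fromRel_ordered Λhat hΛhat, Fintype.card_fin] at this
      omega
    refine ⟨hgen, fun Λ hΛ hg => ?_⟩
    rw [hcard]
    exact ncard_ge_of_generates hn Λ hΛ hg
end
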